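/- arXiv:2512.18825 — 3 statements merged into one kernel-verified Lean document; each statement's English description precedes it below -/
import Mathlib

section
/- Let d ≥ 2 and let T be an infinite d-ary rooted tree, and let G be a closed subgroup of Aut(T). Then the lower Minkowski dimension of G equals ((d−1)/log(d!))·liminf_{n→∞} (1/d^n)·log|r_n(G)|, the upper Minkowski dimension of G equals ((d−1)/log(d!))·limsup_{n→∞} (1/d^n)·log|r_n(G)|, and moreover 0 ≤ dim_lower(G) ≤ dim_upper(G) ≤ 1. -/
open scoped Classical

noncomputable section

/-! ### Minkowski dimension machinery for groups of automorphisms of rooted trees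

A rooted tree is presented by its levels `V 0, V 1, V 2, …` (with `V 0` the root level)
together with parent maps `V (n+1) → V n`.  An automorphism is a family of permutations
of the levels commuting with the parent maps; it is in particular determined by a point of
`∀ k, Equiv.Perm (V k)`.  The restriction `r_n σ` of `σ` to the height-`n` subtree is the
tuple `(σ 0, …, σ n)`, and the natural metric is
`d(σ,τ) = inf { d!^{-(dⁿ-1)/(d-1)} : r_n σ = r_n τ }`. -/

/-- The exponent `(dⁿ - 1)/(d - 1) = 1 + d + ⋯ + d^(n-1)`. -/
def scaleExp (d n : ℕ) : ℕ := ∑ i ∈ Finset.range n, d ^ i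

/-- The scale `ε_n = d!^{-(dⁿ-1)/(d-1)}`, i.e. `1/|Aut(Tₙᶜᵒᵐ)|`. -/
def treeScale (d n : ℕ) : ℝ := ((d.factorial : ℝ) ^ scaleExp d n)⁻¹

/-- Two families of level permutations restrict to the same automorphism of the
height-`n` subtree. -/
def AgreeUpTo {V : ℕ → Type*} (n : ℕ) (σ τ : ∀ k, Equiv.Perm (V k)) : Prop :=
  ∀ k, k ≤ n → σ k = τ k

/-- The natural metric on automorphisms of a rooted `d`-ary tree:
`d(σ,τ) = inf { d!^{-(dⁿ-1)/(d-1)} : σ and τ agree on the height-n subtree }`. -/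
def treeDist {V : ℕ → Type*} (d : ℕ) (σ τ : ∀ k, Equiv.Perm (V k)) : ℝ :=
  sInf {x : ℝ | ∃ n : ℕ, AgreeUpTo n σ τ ∧ x = treeScale d n}

/-- `N_{ε_n}(G)`: the least number of balls of radius `ε_n = treeScale d n` needed to
cover `G`. -/
def coverNum {V : ℕ → Type*} (d : ℕ) (G : Set (∀ k, Equiv.Perm (V k))) (n : ℕ) : ℕ :=
  sInf {m : ℕ | ∃ s : Finset (∀ k, Equiv.Perm (V k)), s.card = m ∧
    G ⊆ ⋃ σ ∈ s, {τ | treeDist d σ τ ≤ treeScale d n}}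

/-- The lower Minkowski dimension `liminf_{ε → 0} log N_ε(G) / log (1/ε)` (computed
along the scales `ε_n` of the metric). -/
def dimLower {V : ℕ → Type*} (d : ℕ) (G : Set (∀ k, Equiv.Perm (V k))) : ℝ :=
  Filter.liminf
    (fun n : ℕ => Real.log (coverNum d G n : ℝ) / Real.log (1 / treeScale d n)) Filter.atTop

/-- The upper Minkowski dimension `limsup_{ε → 0} log N_ε(G) / log (1/ε)` (computed
along the scales `ε_n` of the metric). -/
def dimUpper {V : ℕ → Type*} (d : ℕ) (G : Set (∀ k, Equiv.Perm (V k))) : ℝ :=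
  Filter.limsup
    (fun n : ℕ => Real.log (coverNum d G n : ℝ) / Real.log (1 / treeScale d n)) Filter.atTop

/-- The Minkowski dimension of `G` exists and equals `x`. -/
def HasDim {V : ℕ → Type*} (d : ℕ) (G : Set (∀ k, Equiv.Perm (V k))) (x : ℝ) : Prop :=
  dimLower d G = x ∧ dimUpper d G = x

/-- `G` is closed for the natural metric. -/
def IsDistClosed {V : ℕ → Type*} (d : ℕ) (G : Set (∀ k, Equiv.Perm (V k))) : Prop :=
  ∀ σ, (∀ ε : ℝ, 0 < ε → ∃ τ ∈ G, treeDist d σ τ ≤ ε) → σ ∈ G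

/-- The closure of `G` for the natural metric. -/
def distClosure {V : ℕ → Type*} (d : ℕ) (G : Set (∀ k, Equiv.Perm (V k))) :
    Set (∀ k, Equiv.Perm (V k)) :=
  {σ | ∀ ε : ℝ, 0 < ε → ∃ τ ∈ G, treeDist d σ τ ≤ ε}

/-- `|r_n(G)|`: the cardinality of the restriction of `G` to the height-`n` subtree. -/
def levelCard {V : ℕ → Type*} (G : Set (∀ k, Equiv.Perm (V k))) (n : ℕ) : ℕ :=
  Nat.card ((fun (σ : ∀ k, Equiv.Perm (V k)) (k : Fin (n + 1)) => σ k.1) '' G)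

end
noncomputable section

/-- An infinite `d`-ary rooted tree, presented by its levels: `V n` is the set of
level-`n` vertices, `parent` maps a vertex to its parent, there is a unique root,
and every vertex has at least `1` and at most `d` children. -/
structure DaryTree (d : ℕ) where
  V : ℕ → Type
  parent : ∀ n, V (n + 1) → V n
  root_card : Nat.card (V 0) = 1
  child_lb : ∀ n (v : V n), 1 ≤ Nat.card {w : V (n + 1) // parent n w = v}
  child_ub : ∀ n (v : V n), Nat.card {w : V (n + 1) // parent n w = v} ≤ d

/-- The group of automorphisms of a rooted tree presented by levels and parent maps:
families of level permutations fixing the root level structure and commuting with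
the parent maps. -/
def autGroup {V : ℕ → Type*} (parent : ∀ n, V (n + 1) → V n) :
    Subgroup (∀ n, Equiv.Perm (V n)) where
  carrier := {σ | ∀ n (v : V (n + 1)), parent n (σ (n + 1) v) = σ n (parent n v)}
  one_mem' := by intro n v; rfl
  mul_mem' := by
    intro a b ha hb n v
    simp only [Pi.mul_apply, Equiv.Perm.mul_apply]
    rw [ha, hb]
  inv_mem' := by
    intro a ha n v
    simp only [Pi.inv_apply]
    have h := ha n ((a (n + 1))⁻¹ v)
    rw [show (a (n + 1)) ((a (n + 1))⁻¹ v) = v from (a (n + 1)).apply_symm_apply v] at h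
    rw [h]
    exact ((a n).symm_apply_apply _).symm

/-- The automorphism group `Aut(T)` of an infinite `d`-ary rooted tree. -/
def DaryTree.aut {d : ℕ} (T : DaryTree d) : Subgroup (∀ n, Equiv.Perm (T.V n)) :=
  autGroup T.parent

/-- A `d`-ary rooted tree is complete if every vertex has exactly `d` children. -/
def DaryTree.IsComplete {d : ℕ} (T : DaryTree d) : Prop :=
  ∀ n (v : T.V n), Nat.card {w : T.V (n + 1) // T.parent n w = v} = d

end
noncomputable section AuxProofs
open Filter

lemma aux_card_le_mul_of_fiber {α β : Type*} [Finite α] [Finite β] (f : α → β) (k : ℕ)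
    (h : ∀ b, Nat.card {a // f a = b} ≤ k) : Nat.card α ≤ Nat.card β * k := by
  classical
  have hemb : ∀ b : β, ∃ e : {a // f a = b} → Fin k, Function.Injective e := by
    intro b
    have : Fintype {a // f a = b} := Fintype.ofFinite _
    have h1 : Fintype.card {a // f a = b} ≤ Fintype.card (Fin k) := by
      simpa [← Nat.card_eq_fintype_card, Nat.card_eq_fintype_card] using h b
    obtain ⟨e⟩ := Function.Embedding.nonempty_of_card_le h1
    exact ⟨e, e.injective⟩
  choose e he using hemb
  have key : ∀ b b' (hbb' : b = b') (x : α) (hx : f x = b),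
      e b ⟨x, hx⟩ = e b' ⟨x, hx.trans hbb'⟩ := by
    rintro b b' rfl x hx; rfl
  have hinj : Function.Injective (fun a : α => ((f a, e (f a) ⟨a, rfl⟩) : β × Fin k)) := by
    intro a a' haa'
    have h1 : f a = f a' := congrArg Prod.fst haa'
    have h2 : e (f a) ⟨a, rfl⟩ = e (f a') ⟨a', rfl⟩ := congrArg Prod.snd haa'
    have h3 : e (f a) ⟨a', h1.symm⟩ = e (f a') ⟨a', rfl⟩ := key (f a) (f a') h1 a' h1.symm
    have h4 : e (f a) ⟨a, rfl⟩ = e (f a) ⟨a', h1.symm⟩ := h2.trans h3.symm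
    have := he (f a) h4
    exact congrArg Subtype.val this
  calc Nat.card α ≤ Nat.card (β × Fin k) := Nat.card_le_card_of_injective _ hinj
    _ = Nat.card β * k := by simp [Nat.card_prod]

lemma treeScale_pos (d n : ℕ) : 0 < treeScale d n := by
  have h : (0:ℝ) < (d.factorial : ℝ) := by exact_mod_cast d.factorial_pos
  unfold treeScale
  positivity

lemma scaleExp_lt {d : ℕ} (hd : 1 ≤ d) {m n : ℕ} (h : m < n) : scaleExp d m < scaleExp d n := by
  unfold scaleExp
  apply Finset.sum_lt_sum_of_subset (Finset.range_subset_range.mpr h.le) (Finset.mem_range.mpr h)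
    (Finset.notMem_range_self) (Nat.pow_pos hd)
  · intro j _ _; exact Nat.zero_le _

lemma treeScale_lt {d : ℕ} (hd : 2 ≤ d) {m n : ℕ} (h : m < n) : treeScale d n < treeScale d m := by
  have hfac : (1:ℝ) < (d.factorial : ℝ) := by
    have : 2 ≤ d.factorial := le_trans hd (Nat.self_le_factorial d)
    exact_mod_cast lt_of_lt_of_le one_lt_two (by exact_mod_cast this)
  have hlt : ((d.factorial : ℝ)) ^ scaleExp d m < (d.factorial : ℝ) ^ scaleExp d n :=
    pow_lt_pow_right₀ hfac (scaleExp_lt (le_trans one_le_two hd) h)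
  have h1 : (0:ℝ) < (d.factorial : ℝ) ^ scaleExp d m := by positivity
  exact inv_strictAnti₀ h1 hlt

lemma treeScale_le {d : ℕ} (hd : 2 ≤ d) {m n : ℕ} (h : m ≤ n) : treeScale d n ≤ treeScale d m := by
  rcases h.lt_or_eq with h' | rfl
  · exact (treeScale_lt hd h').le
  · exact le_refl _

lemma log_one_div_treeScale (d n : ℕ) :
    Real.log (1 / treeScale d n) = (scaleExp d n : ℝ) * Real.log (d.factorial : ℝ) := by
  rw [treeScale, one_div, inv_inv, Real.log_pow]

end AuxProofs
noncomputable section AuxProofs2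
open Filter

lemma agree_iff_restrict {V : ℕ → Type*} {n : ℕ} {σ τ : ∀ k, Equiv.Perm (V k)} :
    AgreeUpTo n σ τ ↔ (fun k : Fin (n+1) => σ k.1) = (fun k : Fin (n+1) => τ k.1) := by
  constructor
  · intro h; funext k; exact h k.1 (Nat.lt_succ_iff.mp k.2)
  · intro h k hk
    exact congrFun h ⟨k, Nat.lt_succ_of_le hk⟩

lemma treeDist_le_of_agree {V : ℕ → Type*} (d n : ℕ) {σ τ : ∀ k, Equiv.Perm (V k)}
    (h : AgreeUpTo n σ τ) : treeDist d σ τ ≤ treeScale d n := by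
  apply csInf_le
  · refine ⟨0, ?_⟩
    rintro x ⟨m, -, rfl⟩
    exact (treeScale_pos d m).le
  · exact ⟨n, h, rfl⟩

lemma agree_of_treeDist_le {V : ℕ → Type*} {d : ℕ} (hd : 2 ≤ d)
    (h0 : ∀ σ τ : Equiv.Perm (V 0), σ = τ) {n : ℕ} {σ τ : ∀ k, Equiv.Perm (V k)}
    (h : treeDist d σ τ ≤ treeScale d n) : AgreeUpTo n σ τ := by
  by_contra hc
  rcases n with _ | m
  · exact hc (fun k hk => by
      interval_cases k
      exact h0 _ _)
  have hne : {x : ℝ | ∃ j : ℕ, AgreeUpTo j σ τ ∧ x = treeScale d j}.Nonempty := by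
    refine ⟨treeScale d 0, 0, fun k hk => ?_, rfl⟩
    interval_cases k
    exact h0 _ _
  have hlb : ∀ x ∈ {x : ℝ | ∃ j : ℕ, AgreeUpTo j σ τ ∧ x = treeScale d j}, treeScale d m ≤ x := by
    rintro x ⟨j, hj, rfl⟩
    have hjm : j ≤ m := by
      by_contra hjm'
      exact hc (fun k hk => hj k (le_trans hk (Nat.succ_le_of_lt (lt_of_not_ge hjm'))))
    exact treeScale_le hd hjm
  have h1 : treeScale d m ≤ treeDist d σ τ := le_csInf hne hlb
  have h2 : treeScale d (m+1) < treeScale d m := treeScale_lt hd (Nat.lt_succ_self m)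
  rw [treeDist] at h h1
  linarith

lemma ball_eq_agree {V : ℕ → Type*} {d : ℕ} (hd : 2 ≤ d)
    (h0 : ∀ σ τ : Equiv.Perm (V 0), σ = τ) (n : ℕ) (σ : ∀ k, Equiv.Perm (V k)) :
    {τ | treeDist d σ τ ≤ treeScale d n} = {τ | AgreeUpTo n σ τ} := by
  ext τ
  exact ⟨fun h => agree_of_treeDist_le hd h0 h, fun h => treeDist_le_of_agree d n h⟩

lemma DaryTree.finite_fiber {d : ℕ} (T : DaryTree d) (n : ℕ) (v : T.V n) :
    Finite {w // T.parent n w = v} :=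
  Nat.finite_of_card_ne_zero (by have := T.child_lb n v; omega)

lemma DaryTree.finite_V {d : ℕ} (T : DaryTree d) : ∀ n, Finite (T.V n)
  | 0 => Nat.finite_of_card_ne_zero (by rw [T.root_card]; omega)
  | (n+1) => by
      have h1 := T.finite_V n
      have h2 := T.finite_fiber n
      exact Finite.of_equiv _ (Equiv.sigmaFiberEquiv (T.parent n))

lemma DaryTree.subsingleton_V0 {d : ℕ} (T : DaryTree d) : Subsingleton (T.V 0) := by
  have := Nat.card_eq_one_iff_unique.mp T.root_card
  exact this.1

lemma DaryTree.perm0_eq {d : ℕ} (T : DaryTree d) (σ τ : Equiv.Perm (T.V 0)) : σ = τ := by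
  have := T.subsingleton_V0
  exact Equiv.ext fun v => Subsingleton.elim _ _

lemma DaryTree.card_V_le {d : ℕ} (T : DaryTree d) : ∀ n, Nat.card (T.V n) ≤ d ^ n
  | 0 => by rw [T.root_card, pow_zero]
  | (n+1) => by
      have h1 := T.finite_V n
      have h2 := T.finite_V (n+1)
      have h3 := aux_card_le_mul_of_fiber (T.parent n) d (T.child_ub n)
      calc Nat.card (T.V (n+1)) ≤ Nat.card (T.V n) * d := h3
        _ ≤ d ^ n * d := Nat.mul_le_mul_right d (T.card_V_le n)
        _ = d ^ (n+1) := (pow_succ d n).symm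

end AuxProofs2
noncomputable section AuxProofs3
open Filter

lemma levelCard_zero {d : ℕ} (T : DaryTree d) (G : Subgroup (∀ n, Equiv.Perm (T.V n))) :
    levelCard (G : Set (∀ n, Equiv.Perm (T.V n))) 0 = 1 := by
  rw [levelCard, Nat.card_eq_one_iff_unique]
  constructor
  · constructor
    rintro ⟨x, hx⟩ ⟨y, hy⟩
    apply Subtype.ext
    funext k
    rcases k with ⟨k, hk⟩
    interval_cases k
    exact T.perm0_eq _ _
  · exact ⟨⟨fun k => (1 : ∀ m, Equiv.Perm (T.V m)) k.1, ⟨1, G.one_mem, rfl⟩⟩⟩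

lemma levelCard_succ_le {d : ℕ} (hd : 2 ≤ d) (T : DaryTree d)
    (G : Subgroup (∀ n, Equiv.Perm (T.V n))) (hGsub : G ≤ T.aut) (n : ℕ) :
    levelCard (G : Set (∀ n, Equiv.Perm (T.V n))) (n+1) ≤
      levelCard (G : Set (∀ n, Equiv.Perm (T.V n))) n * d.factorial ^ d ^ n := by
  classical
  haveI : ∀ k, Finite (T.V k) := T.finite_V
  haveI : ∀ m (v : T.V m), Finite {w // T.parent m w = v} := T.finite_fiber
  set I1 : Set (∀ k : Fin (n+2), Equiv.Perm (T.V k.1)) :=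
    (fun (σ : ∀ k, Equiv.Perm (T.V k)) (k : Fin (n+2)) => σ k.1) '' (G : Set _) with hI1
  set I0 : Set (∀ k : Fin (n+1), Equiv.Perm (T.V k.1)) :=
    (fun (σ : ∀ k, Equiv.Perm (T.V k)) (k : Fin (n+1)) => σ k.1) '' (G : Set _) with hI0
  have hρmem : ∀ t : ↥I1, (fun k : Fin (n+1) => t.1 k.castSucc) ∈ I0 := by
    rintro ⟨t, σ, hσG, rfl⟩
    exact ⟨σ, hσG, rfl⟩
  set ρ : ↥I1 → ↥I0 := fun t => ⟨fun k => t.1 k.castSucc, hρmem t⟩ with hρ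
  have hcompat : ∀ t : ↥I1, ∀ w : T.V (n+1),
      T.parent n (t.1 (Fin.last (n+1)) w) = t.1 (Fin.castSucc (Fin.last n)) (T.parent n w) := by
    rintro ⟨t, σ, hσG, rfl⟩ w
    exact hGsub hσG n w
  have hfiber : ∀ s : ↥I0, Nat.card {t : ↥I1 // ρ t = s} ≤ d.factorial ^ d ^ n := by
    intro s
    set sn : Equiv.Perm (T.V n) := s.1 (Fin.last n) with hsn
    set E := ∀ v : T.V n, ({w // T.parent n w = v} ↪ {w // T.parent n w = sn v}) with hE
    set Φ : {t : ↥I1 // ρ t = s} → E := fun t v =>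
      ⟨fun w => ⟨t.1.1 (Fin.last (n+1)) w.1, by
        have h1 := hcompat t.1 w.1
        have h2 : t.1.1 (Fin.castSucc (Fin.last n)) = sn := by
          have h3 := congrFun (congrArg Subtype.val t.2) (Fin.last n)
          exact h3
        rw [h1, h2]
        exact congrArg sn w.2⟩,
      fun w w' hww' => Subtype.ext ((t.1.1 (Fin.last (n+1))).injective
        (congrArg Subtype.val hww'))⟩ with hΦ
    have hΦinj : Function.Injective Φ := by
      intro t t' htt'
      apply Subtype.ext
      apply Subtype.ext
      funext k
      induction k using Fin.lastCases with
      | last =>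
        apply Equiv.ext
        intro w
        have h1 := congrFun htt' (T.parent n w)
        have h2 := congrArg Subtype.val (DFunLike.congr_fun h1 ⟨w, rfl⟩)
        exact h2
      | cast k =>
        have h1 := congrFun (congrArg Subtype.val t.2) k
        have h2 := congrFun (congrArg Subtype.val t'.2) k
        exact h1.trans h2.symm
    have hcardE : Nat.card E ≤ d.factorial ^ d ^ n := by
      haveI : Fintype (T.V n) := Fintype.ofFinite _
      rw [hE, Nat.card_pi]
      have hbound : ∀ v : T.V n,
          Nat.card ({w // T.parent n w = v} ↪ {w // T.parent n w = sn v}) ≤ d.factorial := by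
        intro v
        haveI : Fintype {w // T.parent n w = v} := Fintype.ofFinite _
        haveI : Fintype {w // T.parent n w = sn v} := Fintype.ofFinite _
        have hca : Fintype.card {w // T.parent n w = v} ≤ d := by
          rw [← Nat.card_eq_fintype_card]; exact T.child_ub n v
        have hcb : Fintype.card {w // T.parent n w = sn v} ≤ d := by
          rw [← Nat.card_eq_fintype_card]; exact T.child_ub n (sn v)
        rw [Nat.card_eq_fintype_card, Fintype.card_embedding_eq]
        calc (Fintype.card {w // T.parent n w = sn v}).descFactorial
              (Fintype.card {w // T.parent n w = v})
            ≤ d.descFactorial (Fintype.card {w // T.parent n w = v}) :=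
              Nat.descFactorial_le _ hcb
          _ = d.factorial / (d - Fintype.card {w // T.parent n w = v}).factorial :=
              Nat.descFactorial_eq_div hca
          _ ≤ d.factorial := Nat.div_le_self _ _
      calc ∏ v : T.V n, Nat.card ({w // T.parent n w = v} ↪ {w // T.parent n w = sn v})
          ≤ ∏ _v : T.V n, d.factorial := Finset.prod_le_prod' (fun v _ => hbound v)
        _ = d.factorial ^ Fintype.card (T.V n) := by
            rw [Finset.prod_const, Finset.card_univ]
        _ ≤ d.factorial ^ d ^ n := Nat.pow_le_pow_right d.factorial_pos
            (by rw [← Nat.card_eq_fintype_card]; exact T.card_V_le n)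
    exact le_trans (Nat.card_le_card_of_injective Φ hΦinj) hcardE
  exact aux_card_le_mul_of_fiber ρ (d.factorial ^ d ^ n) hfiber

lemma levelCard_le {d : ℕ} (hd : 2 ≤ d) (T : DaryTree d)
    (G : Subgroup (∀ n, Equiv.Perm (T.V n))) (hGsub : G ≤ T.aut) :
    ∀ n, levelCard (G : Set (∀ n, Equiv.Perm (T.V n))) n ≤ d.factorial ^ scaleExp d n
  | 0 => by rw [levelCard_zero T G, scaleExp]; simp
  | (n+1) => by
      have h1 := levelCard_succ_le hd T G hGsub n
      have h2 := levelCard_le hd T G hGsub n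
      calc levelCard (G : Set (∀ n, Equiv.Perm (T.V n))) (n+1)
          ≤ levelCard (G : Set (∀ n, Equiv.Perm (T.V n))) n * d.factorial ^ d ^ n := h1
        _ ≤ d.factorial ^ scaleExp d n * d.factorial ^ d ^ n :=
            Nat.mul_le_mul_right _ h2
        _ = d.factorial ^ scaleExp d (n+1) := by
            rw [← pow_add, scaleExp, scaleExp, Finset.sum_range_succ]

lemma levelCard_pos {d : ℕ} (T : DaryTree d) (G : Subgroup (∀ n, Equiv.Perm (T.V n))) (n : ℕ) :
    1 ≤ levelCard (G : Set (∀ n, Equiv.Perm (T.V n))) n := by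
  haveI : ∀ k, Finite (T.V k) := T.finite_V
  rw [levelCard]
  haveI : Nonempty ↥((fun (σ : ∀ k, Equiv.Perm (T.V k)) (k : Fin (n+1)) => σ k.1) '' (G : Set _)) :=
    ⟨⟨_, ⟨1, G.one_mem, rfl⟩⟩⟩
  exact Nat.card_pos

lemma coverNum_eq_levelCard {d : ℕ} (hd : 2 ≤ d) (T : DaryTree d)
    (G : Subgroup (∀ n, Equiv.Perm (T.V n))) (n : ℕ) :
    coverNum d (G : Set (∀ n, Equiv.Perm (T.V n))) n
      = levelCard (G : Set (∀ n, Equiv.Perm (T.V n))) n := by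
  classical
  haveI : ∀ k, Finite (T.V k) := T.finite_V
  have h0 := T.perm0_eq
  set R : (∀ k, Equiv.Perm (T.V k)) → (∀ k : Fin (n+1), Equiv.Perm (T.V k.1)) :=
    fun σ k => σ k.1 with hR
  set I : Set (∀ k : Fin (n+1), Equiv.Perm (T.V k.1)) := R '' (G : Set _) with hI
  have hIfin : I.Finite := Set.toFinite I
  have hchoice : ∀ y : ↥hIfin.toFinset, ∃ σ, σ ∈ (G : Set (∀ k, Equiv.Perm (T.V k))) ∧ R σ = y.1 := by
    intro y
    have hy := y.2
    rw [Set.Finite.mem_toFinset] at hy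
    exact hy
  choose g hg1 hg2 using hchoice
  set s : Finset (∀ k, Equiv.Perm (T.V k)) := hIfin.toFinset.attach.image g with hs
  have hcover : (G : Set (∀ k, Equiv.Perm (T.V k))) ⊆
      ⋃ σ ∈ s, {τ | treeDist d σ τ ≤ treeScale d n} := by
    intro τ hτ
    have hy : R τ ∈ I := ⟨τ, hτ, rfl⟩
    set y : ↥hIfin.toFinset := ⟨R τ, by rw [Set.Finite.mem_toFinset]; exact hy⟩ with hy'
    have hgys : g y ∈ s := Finset.mem_image.mpr ⟨y, Finset.mem_attach _ _, rfl⟩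
    refine Set.mem_biUnion hgys ?_
    show treeDist d (g y) τ ≤ treeScale d n
    apply treeDist_le_of_agree
    rw [agree_iff_restrict]
    exact hg2 y
  have hmem : s.card ∈ {m : ℕ | ∃ s' : Finset (∀ k, Equiv.Perm (T.V k)), s'.card = m ∧
      (G : Set (∀ k, Equiv.Perm (T.V k))) ⊆ ⋃ σ ∈ s', {τ | treeDist d σ τ ≤ treeScale d n}} :=
    ⟨s, rfl, hcover⟩
  have hub : coverNum d (G : Set (∀ n, Equiv.Perm (T.V n))) n
      ≤ levelCard (G : Set (∀ n, Equiv.Perm (T.V n))) n := by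
    have h1 : coverNum d (G : Set (∀ n, Equiv.Perm (T.V n))) n ≤ s.card := Nat.sInf_le hmem
    have h2 : s.card ≤ levelCard (G : Set (∀ n, Equiv.Perm (T.V n))) n := by
      calc s.card ≤ hIfin.toFinset.attach.card := Finset.card_image_le
        _ = hIfin.toFinset.card := Finset.card_attach
        _ = Nat.card ↥I := (Nat.card_eq_card_finite_toFinset hIfin).symm
        _ = levelCard (G : Set (∀ n, Equiv.Perm (T.V n))) n := rfl
    exact h1.trans h2
  have hne : {m : ℕ | ∃ s' : Finset (∀ k, Equiv.Perm (T.V k)), s'.card = m ∧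
      (G : Set (∀ k, Equiv.Perm (T.V k))) ⊆ ⋃ σ ∈ s', {τ | treeDist d σ τ ≤ treeScale d n}}.Nonempty :=
    ⟨s.card, hmem⟩
  have hlb : levelCard (G : Set (∀ n, Equiv.Perm (T.V n))) n
      ≤ coverNum d (G : Set (∀ n, Equiv.Perm (T.V n))) n := by
    obtain ⟨s', hs'card, hs'cover⟩ := Nat.sInf_mem hne
    have hchoice2 : ∀ y : ↥I, ∃ σ, σ ∈ s' ∧ R σ = y.1 := by
      rintro ⟨y, τ, hτG, hτ⟩
      have hmem2 := hs'cover hτG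
      rw [Set.mem_iUnion₂] at hmem2
      obtain ⟨σ, hσs, hσd⟩ := hmem2
      have hag : AgreeUpTo n σ τ := agree_of_treeDist_le hd h0 hσd
      rw [agree_iff_restrict] at hag
      exact ⟨σ, hσs, hag.trans hτ⟩
    choose F hF1 hF2 using hchoice2
    have hFinj : Function.Injective (fun y : ↥I => (⟨F y, hF1 y⟩ : {x // x ∈ s'})) := by
      intro y y' hyy'
      apply Subtype.ext
      rw [← hF2 y, ← hF2 y']
      exact congrArg (fun z => R z.1) hyy'
    calc levelCard (G : Set (∀ n, Equiv.Perm (T.V n))) n = Nat.card ↥I := rfl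
      _ ≤ Nat.card {x // x ∈ s'} := Nat.card_le_card_of_injective _ hFinj
      _ = s'.card := Nat.card_eq_finsetCard s'
      _ = coverNum d (G : Set (∀ n, Equiv.Perm (T.V n))) n := hs'card
  exact le_antisymm hub hlb

end AuxProofs3
theorem arboreal_minkowski_dim_formula {d : ℕ} (hd : 2 ≤ d) (T : DaryTree d)
    (G : Subgroup (∀ n, Equiv.Perm (T.V n))) (hGsub : G ≤ T.aut)
    (hGclosed : IsDistClosed d (G : Set (∀ n, Equiv.Perm (T.V n)))) :
    dimLower d (G : Set (∀ n, Equiv.Perm (T.V n))) =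
        ((d : ℝ) - 1) / Real.log (d.factorial : ℝ) *
          Filter.liminf (fun n : ℕ => ((d : ℝ) ^ n)⁻¹ *
            Real.log (levelCard (G : Set (∀ n, Equiv.Perm (T.V n))) n : ℝ)) Filter.atTop ∧
    dimUpper d (G : Set (∀ n, Equiv.Perm (T.V n))) =
        ((d : ℝ) - 1) / Real.log (d.factorial : ℝ) *
          Filter.limsup (fun n : ℕ => ((d : ℝ) ^ n)⁻¹ *
            Real.log (levelCard (G : Set (∀ n, Equiv.Perm (T.V n))) n : ℝ)) Filter.atTop ∧
    0 ≤ dimLower d (G : Set (∀ n, Equiv.Perm (T.V n))) ∧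
    dimLower d (G : Set (∀ n, Equiv.Perm (T.V n))) ≤
      dimUpper d (G : Set (∀ n, Equiv.Perm (T.V n))) ∧
    dimUpper d (G : Set (∀ n, Equiv.Perm (T.V n))) ≤ 1 := by
  classical
  open Filter in
  have hdR : (2:ℝ) ≤ (d:ℝ) := by exact_mod_cast hd
  have hfac2 : 2 ≤ d.factorial := le_trans hd (Nat.self_le_factorial d)
  have hlog : 0 < Real.log (d.factorial : ℝ) :=
    Real.log_pos (by exact_mod_cast hfac2)
  have hL1 : ∀ n, 1 ≤ levelCard (G : Set (∀ n, Equiv.Perm (T.V n))) n :=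
    fun n => levelCard_pos T G n
  have hLle : ∀ n, levelCard (G : Set (∀ n, Equiv.Perm (T.V n))) n ≤ d.factorial ^ scaleExp d n :=
    levelCard_le hd T G hGsub
  have hcovn : ∀ n, coverNum d (G : Set (∀ n, Equiv.Perm (T.V n))) n
      = levelCard (G : Set (∀ n, Equiv.Perm (T.V n))) n :=
    fun n => coverNum_eq_levelCard hd T G n
  set f : ℕ → ℝ := fun n => Real.log (levelCard (G : Set (∀ n, Equiv.Perm (T.V n))) n : ℝ)
      / ((scaleExp d n : ℝ) * Real.log (d.factorial : ℝ)) with hfdef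
  have hfeq : (fun n : ℕ => Real.log (coverNum d (G : Set (∀ n, Equiv.Perm (T.V n))) n : ℝ)
      / Real.log (1 / treeScale d n)) = f := by
    funext n
    rw [hfdef, hcovn n, log_one_div_treeScale]
  have hdl : dimLower d (G : Set (∀ n, Equiv.Perm (T.V n))) = Filter.liminf f Filter.atTop :=
    congrArg (fun u : ℕ → ℝ => Filter.liminf u Filter.atTop) hfeq
  have hdu : dimUpper d (G : Set (∀ n, Equiv.Perm (T.V n))) = Filter.limsup f Filter.atTop :=
    congrArg (fun u : ℕ → ℝ => Filter.limsup u Filter.atTop) hfeq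
  set b : ℕ → ℝ := fun n : ℕ => ((d : ℝ) ^ n)⁻¹ *
      Real.log (levelCard (G : Set (∀ n, Equiv.Perm (T.V n))) n : ℝ) with hbdef
  set c : ℝ := ((d : ℝ) - 1) / Real.log (d.factorial : ℝ) with hcdef
  have hc : 0 < c := div_pos (by linarith) hlog
  have hlogL_nonneg : ∀ n, 0 ≤ Real.log (levelCard (G : Set (∀ n, Equiv.Perm (T.V n))) n : ℝ) :=
    fun n => Real.log_nonneg (by exact_mod_cast hL1 n)
  have hlogL_le : ∀ n, Real.log (levelCard (G : Set (∀ n, Equiv.Perm (T.V n))) n : ℝ)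
      ≤ (scaleExp d n : ℝ) * Real.log (d.factorial : ℝ) := by
    intro n
    have h1 : Real.log (levelCard (G : Set (∀ n, Equiv.Perm (T.V n))) n : ℝ)
        ≤ Real.log ((d.factorial ^ scaleExp d n : ℕ) : ℝ) := by
      rw [Real.log_le_log_iff (by exact_mod_cast hL1 n)
        (by positivity)]
      exact_mod_cast hLle n
    rwa [Nat.cast_pow, Real.log_pow] at h1
  have hf0 : ∀ n, 0 ≤ f n := fun n =>
    div_nonneg (hlogL_nonneg n) (mul_nonneg (Nat.cast_nonneg _) hlog.le)
  have hf1 : ∀ n, f n ≤ 1 := fun n =>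
    div_le_one_of_le₀ (hlogL_le n) (mul_nonneg (Nat.cast_nonneg _) hlog.le)
  have hgeom : ∀ n : ℕ, ((d:ℝ) - 1) * (scaleExp d n : ℝ) = (d:ℝ)^n - 1 := by
    intro n
    have hne1 : (d:ℝ) ≠ 1 := (by linarith : (1:ℝ) < (d:ℝ)).ne'
    have hne2 : (d:ℝ) - 1 ≠ 0 := sub_ne_zero.mpr hne1
    rw [scaleExp]
    push_cast
    rw [geom_sum_eq hne1, mul_comm, div_mul_cancel₀ _ hne2]
  have hiden : ∀ n : ℕ, c * b n = f n * (1 - ((d:ℝ)^n)⁻¹) := by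
    intro n
    rcases Nat.eq_zero_or_pos n with rfl | hn
    · have hL0 : levelCard (G : Set (∀ n, Equiv.Perm (T.V n))) 0 = 1 := levelCard_zero T G
      simp [hbdef, hfdef, hL0]
    · have hSpos : 0 < scaleExp d n := by
        have := scaleExp_lt (le_trans one_le_two hd) hn
        simpa [scaleExp] using this
      have hS : (0:ℝ) < (scaleExp d n : ℝ) := by exact_mod_cast hSpos
      have hP : (0:ℝ) < (d:ℝ)^n := by positivity
      simp only [hfdef, hbdef, hcdef]
      rw [show (1:ℝ) - ((d:ℝ)^n)⁻¹ = ((d:ℝ)^n - 1)/(d:ℝ)^n from by field_simp]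
      rw [← hgeom n]
      field_simp
  have hPinv_pos : ∀ n : ℕ, (0:ℝ) < ((d:ℝ)^n)⁻¹ := fun n => by positivity
  have hub2 : ∀ n, c * b n ≤ f n := by
    intro n
    rw [hiden n]
    nlinarith [hf0 n, (hPinv_pos n).le]
  have hub3 : ∀ n, f n ≤ c * b n + ((d:ℝ)^n)⁻¹ := by
    intro n
    rw [hiden n]
    nlinarith [hf1 n, (hPinv_pos n).le]
  have hb0 : ∀ n, 0 ≤ b n := fun n => mul_nonneg (hPinv_pos n).le (hlogL_nonneg n)
  have hcb0 : ∀ n, 0 ≤ c * b n := fun n => mul_nonneg hc.le (hb0 n)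
  have hcb1 : ∀ n, c * b n ≤ 1 := fun n => (hub2 n).trans (hf1 n)
  have hbub : ∀ n, b n ≤ 1 / c := fun n => by
    rw [le_div_iff₀ hc, mul_comm]
    exact hcb1 n
  -- boundedness
  have hf_ab : Filter.IsBoundedUnder (· ≤ ·) Filter.atTop f := Filter.isBoundedUnder_of ⟨1, hf1⟩
  have hf_be : Filter.IsBoundedUnder (· ≥ ·) Filter.atTop f := Filter.isBoundedUnder_of ⟨0, hf0⟩
  have hcb_ab : Filter.IsBoundedUnder (· ≤ ·) Filter.atTop (fun n => c * b n) :=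
    Filter.isBoundedUnder_of ⟨1, hcb1⟩
  have hcb_be : Filter.IsBoundedUnder (· ≥ ·) Filter.atTop (fun n => c * b n) :=
    Filter.isBoundedUnder_of ⟨0, hcb0⟩
  have hb_ab : Filter.IsBoundedUnder (· ≤ ·) Filter.atTop b := Filter.isBoundedUnder_of ⟨1/c, hbub⟩
  have hb_be : Filter.IsBoundedUnder (· ≥ ·) Filter.atTop b := Filter.isBoundedUnder_of ⟨0, hb0⟩
  -- c * liminf/limsup b
  have hmono_c : Monotone (fun x : ℝ => c * x) := fun x y hxy => mul_le_mul_of_nonneg_left hxy hc.le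
  have hmul_inf : Filter.liminf (fun n => c * b n) Filter.atTop = c * Filter.liminf b Filter.atTop := by
    have h := hmono_c.map_liminf_of_continuousAt (F := Filter.atTop) b
      ((continuous_const.mul continuous_id).continuousAt)
      (hb_ab.isCoboundedUnder_ge) hb_be
    exact h.symm
  have hmul_sup : Filter.limsup (fun n => c * b n) Filter.atTop = c * Filter.limsup b Filter.atTop := by
    have h := hmono_c.map_limsup_of_continuousAt (F := Filter.atTop) b
      ((continuous_const.mul continuous_id).continuousAt)
      hb_ab (hb_be.isCoboundedUnder_le)
    exact h.symm
  -- eventual epsilon bound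
  have hev_eps : ∀ ε : ℝ, 0 < ε → ∀ᶠ n in Filter.atTop, f n ≤ c * b n + ε := by
    intro ε hε
    have h1 : Filter.Tendsto (fun n : ℕ => ((d:ℝ)^n)⁻¹) Filter.atTop (nhds 0) := by
      have h2 : Filter.Tendsto (fun n : ℕ => (d:ℝ)^n) Filter.atTop Filter.atTop :=
        tendsto_pow_atTop_atTop_of_one_lt (by linarith)
      exact tendsto_inv_atTop_zero.comp h2
    have h2 : ∀ᶠ n in Filter.atTop, ((d:ℝ)^n)⁻¹ < ε := h1.eventually_lt_const hε
    filter_upwards [h2] with n hn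
    linarith [hub3 n]
  have hinf_le : Filter.liminf f Filter.atTop ≤ Filter.liminf (fun n => c * b n) Filter.atTop := by
    apply le_of_forall_sub_le
    intro ε hε
    rw [sub_le_iff_le_add]
    have hstep : Filter.liminf f Filter.atTop ≤ Filter.liminf (fun n => c * b n + ε) Filter.atTop :=
      Filter.liminf_le_liminf (hev_eps ε hε) hf_be
        ((Filter.isBoundedUnder_of ⟨1 + ε, fun n => by linarith [hcb1 n]⟩ :
          Filter.IsBoundedUnder (· ≤ ·) Filter.atTop (fun n => c * b n + ε)).isCoboundedUnder_ge)
    have haddc : Filter.liminf (fun n => c * b n + ε) Filter.atTop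
        = Filter.liminf (fun n => c * b n) Filter.atTop + ε := by
      have hmono : Monotone (fun x : ℝ => x + ε) := fun x y hxy => add_le_add_left hxy ε
      have h := hmono.map_liminf_of_continuousAt (F := Filter.atTop) (fun n => c * b n)
        ((continuous_id.add continuous_const).continuousAt)
        (hcb_ab.isCoboundedUnder_ge) hcb_be
      exact h.symm
    rw [haddc] at hstep
    exact hstep
  have hinf_ge : Filter.liminf (fun n => c * b n) Filter.atTop ≤ Filter.liminf f Filter.atTop :=
    Filter.liminf_le_liminf (Filter.Eventually.of_forall hub2) hcb_be
      (hf_ab.isCoboundedUnder_ge)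
  have hsup_le : Filter.limsup f Filter.atTop ≤ Filter.limsup (fun n => c * b n) Filter.atTop := by
    apply le_of_forall_sub_le
    intro ε hε
    rw [sub_le_iff_le_add]
    have hstep : Filter.limsup f Filter.atTop ≤ Filter.limsup (fun n => c * b n + ε) Filter.atTop :=
      Filter.limsup_le_limsup (hev_eps ε hε) (hf_be.isCoboundedUnder_le)
        (Filter.isBoundedUnder_of ⟨1 + ε, fun n => by linarith [hcb1 n]⟩)
    have haddc : Filter.limsup (fun n => c * b n + ε) Filter.atTop
        = Filter.limsup (fun n => c * b n) Filter.atTop + ε := by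
      have hmono : Monotone (fun x : ℝ => x + ε) := fun x y hxy => add_le_add_left hxy ε
      have h := hmono.map_limsup_of_continuousAt (F := Filter.atTop) (fun n => c * b n)
        ((continuous_id.add continuous_const).continuousAt)
        hcb_ab (hcb_be.isCoboundedUnder_le)
      exact h.symm
    rw [haddc] at hstep
    exact hstep
  have hsup_ge : Filter.limsup (fun n => c * b n) Filter.atTop ≤ Filter.limsup f Filter.atTop :=
    Filter.limsup_le_limsup (Filter.Eventually.of_forall hub2)
      (hcb_be.isCoboundedUnder_le) hf_ab
  have hliminf_eq : Filter.liminf f Filter.atTop = c * Filter.liminf b Filter.atTop := by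
    rw [← hmul_inf]
    exact le_antisymm hinf_le hinf_ge
  have hlimsup_eq : Filter.limsup f Filter.atTop = c * Filter.limsup b Filter.atTop := by
    rw [← hmul_sup]
    exact le_antisymm hsup_le hsup_ge
  refine ⟨?_, ?_, ?_, ?_, ?_⟩
  · rw [hdl, hliminf_eq]
  · rw [hdu, hlimsup_eq]
  · rw [hdl]
    exact Filter.le_liminf_of_le (hf_ab.isCoboundedUnder_ge) (Filter.Eventually.of_forall hf0)
  · rw [hdl, hdu]
    exact Filter.liminf_le_limsup hf_ab hf_be
  · rw [hdu]
    exact Filter.limsup_le_of_le (hf_be.isCoboundedUnder_le) (Filter.Eventually.of_forall hf1)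
end

section
/- Let K be a number field, let X/K be a complete nonsingular curve of genus 0 or 1, let f : X → X be a morphism of degree d ≥ 2 defined over K, and let α ∈ X(K). Then dim_lower(G_{f,α}) = ((d−1)/log(d!))·liminf_{n→∞} log[K(f^{−n}(α)) : K]/d^n and dim_upper(G_{f,α}) = ((d−1)/log(d!))·limsup_{n→∞} log[K(f^{−n}(α)) : K]/d^n; in particular dim(G_{f,α}) equals ((d−1)/log(d!))·lim_{n→∞} log[K(f^{−n}(α)) : K]/d^n whenever this limit exists. -/
open scoped Classical

noncomputable section

/-- A fixed algebraic closure `K̄` of `K`. -/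
abbrev Kbar (K : Type*) [Field K] : Type _ := AlgebraicClosure K

/-- The level-`n` vertices of the preimage tree of `α` under `φ`: the set
`φ^{-n}(α)`. -/
abbrev preV {Pts : Type*} (φ : Pts → Pts) (α : Pts) (n : ℕ) : Type _ :=
  {β : Pts // φ^[n] β = α}

/-- The parent map of the preimage tree: a vertex `β ∈ φ^{-(n+1)}(α)` is joined to
`φ(β) ∈ φ^{-n}(α)`. -/
def preParent {Pts : Type*} (φ : Pts → Pts) (α : Pts) (n : ℕ)
    (β : preV φ α (n + 1)) : preV φ α n :=
  ⟨φ β.1, by have h := β.2; rwa [Function.iterate_succ_apply] at h⟩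

/-- The image `G_{φ,α}` of the arboreal Galois representation attached to `(φ, α)` over
the base field `L` (an intermediate field of `K̄/K`): the set of families of level
permutations of the preimage tree induced by elements of `Gal(K̄/L)`, acting on points
via `act`. -/
def arbGal {K : Type*} [Field K] {Pts : Type*}
    (act : (Kbar K ≃ₐ[K] Kbar K) → Pts → Pts) (L : IntermediateField K (Kbar K))
    (φ : Pts → Pts) (α : Pts) : Set (∀ n, Equiv.Perm (preV φ α n)) :=
  {g | ∃ σ : Kbar K ≃ₐ[K] Kbar K, (∀ x ∈ L, σ x = x) ∧
    ∀ (n : ℕ) (β : preV φ α n), (g n β : Pts) = act σ (β : Pts)}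

end
noncomputable section

/-- A complete nonsingular curve `X` over the number field `K`, presented through its
set of `K̄`-points: the natural action of `Gal(K̄/K)` on `X(K̄)`, and the field of
definition `K(P)` of each point, characterized by the property that an automorphism
of `K̄/K` fixes `P` if and only if it fixes `K(P)` pointwise. -/
structure CurveOverK (K : Type*) [Field K] [NumberField K] where
  Pts : Type*
  genus : ℕ
  act : (Kbar K ≃ₐ[K] Kbar K) →* Equiv.Perm Pts
  fod : Pts → IntermediateField K (Kbar K)
  fod_fin : ∀ P : Pts, FiniteDimensional K (fod P)
  fod_spec : ∀ (σ : Kbar K ≃ₐ[K] Kbar K) (P : Pts), act σ P = P ↔ ∀ x ∈ fod P, σ x = x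

/-- A morphism `f : X → X` of degree `d` defined over `K`, presented through its action
on `X(K̄)`: it commutes with the Galois action, and each fiber is finite and nonempty
with at most `d` points. -/
structure CurveMor {K : Type*} [Field K] [NumberField K] (X : CurveOverK K) (d : ℕ) where
  toFun : X.Pts → X.Pts
  equivariant : ∀ (σ : Kbar K ≃ₐ[K] Kbar K) (P : X.Pts),
    toFun (X.act σ P) = X.act σ (toFun P)
  fiber_lb : ∀ P : X.Pts, 1 ≤ Nat.card {Q : X.Pts // toFun Q = P}
  fiber_ub : ∀ P : X.Pts, Nat.card {Q : X.Pts // toFun Q = P} ≤ d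

/-- The field `K(f^{-n}(α))` generated over `K` by the `n`-th preimages of `α`. -/
def levelField {K : Type*} [Field K] [NumberField K] (X : CurveOverK K)
    (f : X.Pts → X.Pts) (α : X.Pts) (n : ℕ) : IntermediateField K (Kbar K) :=
  ⨆ β : preV f α n, X.fod (β : X.Pts)

end
noncomputable section
open Filter

namespace ArbAux

variable {V : ℕ → Type*}

theorem treeScale_pos {d : ℕ} (hd : 2 ≤ d) (n : ℕ) : 0 < treeScale d n := by
  have : (0:ℝ) < (d.factorial : ℝ) ^ scaleExp d n := by
    positivity
  exact inv_pos.2 this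

theorem one_lt_factorial {d : ℕ} (hd : 2 ≤ d) : (1:ℝ) < (d.factorial : ℝ) := by
  have h2 : 2 ≤ d.factorial := (Nat.self_le_factorial d).trans' hd
  exact_mod_cast lt_of_lt_of_le one_lt_two (by exact_mod_cast h2)

theorem scaleExp_lt {d : ℕ} (hd : 2 ≤ d) {m n : ℕ} (h : m < n) :
    scaleExp d m < scaleExp d n := by
  unfold scaleExp
  apply Finset.sum_lt_sum_of_subset (Finset.range_subset_range.2 h.le) (i := m)
    (by simp [h]) (by simp) (by positivity)
  intro j _ _; positivity

theorem treeScale_lt {d : ℕ} (hd : 2 ≤ d) {m n : ℕ} (h : m < n) :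
    treeScale d n < treeScale d m := by
  unfold treeScale
  apply inv_strictAnti₀
  · positivity
  · exact pow_lt_pow_right₀ (one_lt_factorial hd) (scaleExp_lt hd h)

theorem treeScale_le {d : ℕ} (hd : 2 ≤ d) {m n : ℕ} (h : m ≤ n) :
    treeScale d n ≤ treeScale d m := by
  rcases h.lt_or_eq with h | rfl
  · exact (treeScale_lt hd h).le
  · rfl

theorem agreeUpTo_zero [Subsingleton (V 0)] (σ τ : ∀ k, Equiv.Perm (V k)) :
    AgreeUpTo 0 σ τ := by
  intro k hk
  interval_cases k
  apply Subsingleton.elim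

theorem agreeUpTo_mono {m n : ℕ} (h : m ≤ n) {σ τ : ∀ k, Equiv.Perm (V k)}
    (ha : AgreeUpTo n σ τ) : AgreeUpTo m σ τ :=
  fun k hk => ha k (hk.trans h)

theorem treeDist_le_iff {d : ℕ} (hd : 2 ≤ d) [Subsingleton (V 0)]
    (σ τ : ∀ k, Equiv.Perm (V k)) (n : ℕ) :
    treeDist d σ τ ≤ treeScale d n ↔ AgreeUpTo n σ τ := by
  constructor
  · intro h
    by_contra hno
    rcases Nat.eq_zero_or_pos n with rfl | hn
    · exact hno (agreeUpTo_zero σ τ)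
    have hsub : ∀ x ∈ {x : ℝ | ∃ m : ℕ, AgreeUpTo m σ τ ∧ x = treeScale d m},
        treeScale d (n-1) ≤ x := by
      rintro x ⟨m, hm, rfl⟩
      have hmn : m ≤ n - 1 := by
        by_contra hgt
        exact hno (agreeUpTo_mono (by omega) hm)
      exact treeScale_le hd hmn
    have hne : ({x : ℝ | ∃ m : ℕ, AgreeUpTo m σ τ ∧ x = treeScale d m}).Nonempty :=
      ⟨treeScale d 0, 0, agreeUpTo_zero σ τ, rfl⟩
    have h1 : treeScale d (n-1) ≤ treeDist d σ τ := le_csInf hne hsub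
    have h2 : treeScale d n < treeScale d (n-1) := treeScale_lt hd (by omega)
    linarith [h.trans_lt h2, h1]
  · intro h
    apply csInf_le
    · exact ⟨0, by rintro x ⟨m, _, rfl⟩; exact (treeScale_pos hd m).le⟩
    · exact ⟨n, h, rfl⟩

end ArbAux
namespace ArbAux

variable {V : ℕ → Type*}

/-- restriction to levels `0..n` -/
def restr (n : ℕ) (σ : ∀ k, Equiv.Perm (V k)) : ∀ k : Fin (n+1), Equiv.Perm (V k.1) :=
  fun k => σ k.1

theorem restr_eq_iff {n : ℕ} {σ τ : ∀ k, Equiv.Perm (V k)} :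
    restr n σ = restr n τ ↔ AgreeUpTo n σ τ := by
  constructor
  · intro h k hk
    exact congrFun h ⟨k, by omega⟩
  · intro h
    funext k
    exact h k.1 (by omega)

theorem coverNum_eq_card_image {d : ℕ} (hd : 2 ≤ d) [Subsingleton (V 0)]
    [∀ k, Finite (V k)] (G : Set (∀ k, Equiv.Perm (V k))) (n : ℕ) :
    coverNum d G n = Nat.card (restr n '' G) := by
  classical
  haveI : ∀ k : Fin (n+1), Finite (Equiv.Perm (V k.1)) := fun k => inferInstance
  haveI : Finite (∀ k : Fin (n+1), Equiv.Perm (V k.1)) := inferInstance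
  haveI hTfin : Finite (restr n '' G) := Subtype.finite
  haveI : Fintype (restr n '' G) := Fintype.ofFinite _
  set T : Set (∀ k : Fin (n+1), Equiv.Perm (V k.1)) := restr n '' G with hT
  -- representatives
  set pick : T → (∀ k, Equiv.Perm (V k)) := fun t => Classical.choose t.2 with hpick
  have hpickG : ∀ t : T, pick t ∈ G ∧ restr n (pick t) = t.1 := fun t =>
    ⟨(Classical.choose_spec t.2).1, (Classical.choose_spec t.2).2⟩
  have hpick_inj : Function.Injective pick := by
    intro t t' h
    apply Subtype.ext
    rw [← (hpickG t).2, ← (hpickG t').2, h]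
  set s : Finset (∀ k, Equiv.Perm (V k)) := Finset.univ.image pick with hs
  have hscard : s.card = Nat.card T := by
    rw [hs, Finset.card_image_of_injective _ hpick_inj, Finset.card_univ,
      Nat.card_eq_fintype_card]
  have hmem : Nat.card T ∈ {m : ℕ | ∃ s : Finset (∀ k, Equiv.Perm (V k)), s.card = m ∧
      G ⊆ ⋃ σ ∈ s, {τ | treeDist d σ τ ≤ treeScale d n}} := by
    refine ⟨s, hscard, ?_⟩
    intro τ hτ
    have ht : restr n τ ∈ T := ⟨τ, hτ, rfl⟩
    refine Set.mem_iUnion.2 ⟨pick ⟨_, ht⟩, Set.mem_iUnion.2 ⟨?_, ?_⟩⟩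
    · exact Finset.mem_image.2 ⟨⟨_, ht⟩, Finset.mem_univ _, rfl⟩
    · show treeDist d _ τ ≤ treeScale d n
      rw [treeDist_le_iff hd]
      exact restr_eq_iff.1 (hpickG ⟨_, ht⟩).2
  have hlb : ∀ m ∈ {m : ℕ | ∃ s : Finset (∀ k, Equiv.Perm (V k)), s.card = m ∧
      G ⊆ ⋃ σ ∈ s, {τ | treeDist d σ τ ≤ treeScale d n}}, Nat.card T ≤ m := by
    rintro m ⟨u, rfl, hcov⟩
    -- map each t ∈ T to an element of u agreeing with it
    have hmap : ∀ t : T, ∃ σ ∈ u, restr n σ = t.1 := by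
      rintro ⟨t, τ, hτG, rfl⟩
      rcases Set.mem_iUnion.1 (hcov hτG) with ⟨σ, hσ⟩
      rcases Set.mem_iUnion.1 hσ with ⟨hσu, hσd⟩
      refine ⟨σ, hσu, ?_⟩
      exact restr_eq_iff.2 ((treeDist_le_iff hd _ _ _).1 hσd)
    choose F hFu hFr using hmap
    have hFinj : Function.Injective F := by
      intro t t' h
      apply Subtype.ext
      rw [← hFr t, ← hFr t', h]
    calc Nat.card T = Fintype.card T := Nat.card_eq_fintype_card
      _ ≤ u.card := by
          have := Fintype.card_le_of_injective (fun t => (⟨F t, hFu t⟩ : {x // x ∈ u}))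
            (fun t t' h => hFinj (by simpa using congrArg Subtype.val h))
          simpa using this
  exact le_antisymm (Nat.sInf_le hmem) (hlb _ (Nat.sInf_mem ⟨_, hmem⟩))

end ArbAux
namespace ArbAux

variable {K : Type*} [Field K] [NumberField K] {d : ℕ}
variable (X : CurveOverK K) (f : CurveMor X d) (α : X.Pts)

/-- shorthand for the absolute Galois group -/
local notation "Γ" => (Kbar K ≃ₐ[K] Kbar K)

theorem fiber_finite (P : X.Pts) : Finite {Q : X.Pts // f.toFun Q = P} ∧
    Nonempty {Q : X.Pts // f.toFun Q = P} := by
  have h := f.fiber_lb P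
  have := Nat.card_ne_zero (α := {Q : X.Pts // f.toFun Q = P})
  have h0 : Nat.card {Q : X.Pts // f.toFun Q = P} ≠ 0 := by omega
  rcases this.1 h0 with ⟨h1, h2⟩
  exact ⟨h2, h1⟩

instance instSubsingletonV0 : Subsingleton (preV f.toFun α 0) := by
  constructor
  rintro ⟨a, ha⟩ ⟨b, hb⟩
  simp only [Function.iterate_zero, id] at ha hb
  exact Subtype.ext (ha.trans hb.symm)

/-- `preV (n+1)` injects into the fibered sigma over `preV n`. -/
def toSigma (n : ℕ) (γ : preV f.toFun α (n+1)) :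
    Σ β : preV f.toFun α n, {Q : X.Pts // f.toFun Q = β.1} :=
  ⟨preParent f.toFun α n γ, ⟨γ.1, rfl⟩⟩

theorem toSigma_injective (n : ℕ) : Function.Injective (toSigma X f α n) := by
  intro γ γ' h
  exact Subtype.ext (congrArg (fun p : (Σ β : preV f.toFun α n,
    {Q : X.Pts // f.toFun Q = β.1}) => p.2.1) h)

instance instFiniteV : ∀ n, Finite (preV f.toFun α n)
  | 0 => by
      haveI := instSubsingletonV0 X f α
      exact Finite.of_subsingleton
  | (n+1) => by
      haveI := instFiniteV n
      haveI : ∀ β : preV f.toFun α n, Finite {Q : X.Pts // f.toFun Q = β.1} :=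
        fun β => (fiber_finite X f β.1).1
      exact Finite.of_injective _ (toSigma_injective X f α n)

instance instNonemptyV : ∀ n, Nonempty (preV f.toFun α n)
  | 0 => ⟨⟨α, rfl⟩⟩
  | (n+1) => by
      rcases instNonemptyV n with ⟨β⟩
      rcases (fiber_finite X f β.1).2 with ⟨⟨Q, hQ⟩⟩
      exact ⟨⟨Q, by rw [Function.iterate_succ_apply, hQ]; exact β.2⟩⟩

theorem card_V_le (n : ℕ) (hd : 2 ≤ d) : Nat.card (preV f.toFun α n) ≤ d ^ n := by
  induction n with
  | zero =>
      simpa using Nat.card_le_card_of_injective _ (Function.injective_of_subsingleton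
        (α := preV f.toFun α 0) (β := PUnit) (fun _ => PUnit.unit))
  | succ n ih =>
      haveI : ∀ β : preV f.toFun α n, Finite {Q : X.Pts // f.toFun Q = β.1} :=
        fun β => (fiber_finite X f β.1).1
      haveI := Fintype.ofFinite (preV f.toFun α n)
      haveI : ∀ β : preV f.toFun α n, Fintype {Q : X.Pts // f.toFun Q = β.1} :=
        fun β => Fintype.ofFinite _
      calc Nat.card (preV f.toFun α (n+1))
          ≤ Nat.card (Σ β : preV f.toFun α n, {Q : X.Pts // f.toFun Q = β.1}) :=
            Nat.card_le_card_of_injective _ (toSigma_injective X f α n)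
        _ = ∑ β : preV f.toFun α n, Nat.card {Q : X.Pts // f.toFun Q = β.1} := by
            rw [Nat.card_eq_fintype_card, Fintype.card_sigma]
            exact Finset.sum_congr rfl (fun β _ => (Nat.card_eq_fintype_card).symm)
        _ ≤ ∑ _β : preV f.toFun α n, d := Finset.sum_le_sum (fun β _ => f.fiber_ub β.1)
        _ = Fintype.card (preV f.toFun α n) * d := by
            rw [Finset.sum_const, Finset.card_univ, smul_eq_mul]
        _ ≤ d ^ n * d := by
            have := ih
            rw [Nat.card_eq_fintype_card] at this
            exact Nat.mul_le_mul_right d this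
        _ = d ^ (n+1) := by ring

end ArbAux
namespace ArbAux

variable {K : Type*} [Field K] [NumberField K] {d : ℕ}
variable (X : CurveOverK K) (f : CurveMor X d) (α : X.Pts)

theorem act_fix_alpha (hα : X.fod α = ⊥) (σ : Kbar K ≃ₐ[K] Kbar K) : X.act σ α = α := by
  rw [X.fod_spec σ α, hα]
  intro x hx
  rcases IntermediateField.mem_bot.1 hx with ⟨k, rfl⟩
  exact σ.commutes k

theorem act_iterate (σ : Kbar K ≃ₐ[K] Kbar K) (n : ℕ) (P : X.Pts) :
    f.toFun^[n] (X.act σ P) = X.act σ (f.toFun^[n] P) := by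
  induction n generalizing P with
  | zero => rfl
  | succ n ih =>
      rw [Function.iterate_succ_apply, Function.iterate_succ_apply, f.equivariant, ih]

theorem act_mem_level (hα : X.fod α = ⊥) (σ : Kbar K ≃ₐ[K] Kbar K) (n : ℕ) (P : X.Pts) :
    f.toFun^[n] (X.act σ P) = α ↔ f.toFun^[n] P = α := by
  rw [act_iterate X f]
  constructor
  · intro h
    have := congrArg (X.act σ⁻¹) h
    rw [← Equiv.Perm.mul_apply, ← map_mul, inv_mul_cancel, map_one,
      Equiv.Perm.coe_one, id] at this
    rw [this, act_fix_alpha X α hα]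
  · intro h
    rw [h, act_fix_alpha X α hα]

/-- the permutation of level `n` induced by `σ`. -/
def permLevel (hα : X.fod α = ⊥) (σ : Kbar K ≃ₐ[K] Kbar K) (n : ℕ) : Equiv.Perm (preV f.toFun α n) :=
  ((X.act σ).subtypeEquiv (fun P => (act_mem_level X f α hα σ n P).symm))

@[simp] theorem permLevel_apply (hα : X.fod α = ⊥) (σ : Kbar K ≃ₐ[K] Kbar K) (n : ℕ)
    (β : preV f.toFun α n) : (permLevel X f α hα σ n β : X.Pts) = X.act σ β.1 := rfl

/-- the arboreal representation as a function `Γ → ∏ₖ Perm (Vₖ)`. -/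
def gmap (hα : X.fod α = ⊥) (σ : Kbar K ≃ₐ[K] Kbar K) : ∀ k, Equiv.Perm (preV f.toFun α k) :=
  fun k => permLevel X f α hα σ k

theorem arbGal_eq_range (hα : X.fod α = ⊥) :
    arbGal (K := K) (fun σ => ⇑(X.act σ)) ⊥ f.toFun α = Set.range (gmap X f α hα) := by
  ext g
  constructor
  · rintro ⟨σ, -, hg⟩
    refine ⟨σ, ?_⟩
    funext n
    apply Equiv.ext
    intro β
    exact Subtype.ext ((permLevel_apply X f α hα σ n β).trans (hg n β).symm)
  · rintro ⟨σ, rfl⟩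
    refine ⟨σ, ?_, fun n β => rfl⟩
    intro x hx
    rcases IntermediateField.mem_bot.1 hx with ⟨k, rfl⟩
    exact σ.commutes k

/-- every level-`k` vertex has an ancestor at any higher level -/
theorem exists_ancestor (k m : ℕ) (β : preV f.toFun α k) :
    ∃ γ : preV f.toFun α (k + m), f.toFun^[m] γ.1 = β.1 := by
  induction m with
  | zero => exact ⟨β, rfl⟩
  | succ m ih =>
      rcases ih with ⟨γ, hγ⟩
      rcases (fiber_finite X f γ.1).2 with ⟨⟨Q, hQ⟩⟩
      refine ⟨⟨Q, ?_⟩, ?_⟩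
      · show f.toFun^[(k + m) + 1] Q = α
        rw [Function.iterate_succ_apply, hQ]; exact γ.2
      · rw [Function.iterate_succ_apply, hQ]; exact hγ

/-- the top level of a restriction determines the lower levels -/
theorem permLevel_eq_of_top (hα : X.fod α = ⊥) {σ τ : Kbar K ≃ₐ[K] Kbar K} {n : ℕ}
    (h : permLevel X f α hα σ n = permLevel X f α hα τ n) {k : ℕ} (hk : k ≤ n) :
    permLevel X f α hα σ k = permLevel X f α hα τ k := by
  apply Equiv.ext
  intro β
  apply Subtype.ext
  rcases exists_ancestor X f α (k := k) (m := n - k) β with ⟨γ0, hγ0⟩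
  have hkn : k + (n - k) = n := by omega
  have hγ2 : f.toFun^[n] (γ0 : X.Pts) = α :=
    ((congrArg (fun m => f.toFun^[m] (γ0 : X.Pts)) hkn).symm).trans γ0.2
  set γ : preV f.toFun α n := ⟨γ0.1, hγ2⟩
  have hγ : f.toFun^[n - k] (γ : X.Pts) = β.1 := hγ0
  have hσ : X.act σ β.1 = f.toFun^[n-k] (X.act σ γ.1) := by
    rw [act_iterate X f, hγ]
  have hτ : X.act τ β.1 = f.toFun^[n-k] (X.act τ γ.1) := by
    rw [act_iterate X f, hγ]
  have hcongr : (permLevel X f α hα σ n γ : X.Pts) = permLevel X f α hα τ n γ := by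
    rw [h]
  simp only [permLevel_apply] at hcongr
  simp only [permLevel_apply]
  rw [hσ, hτ, hcongr]

end ArbAux
namespace ArbAux

variable {K : Type*} [Field K] [NumberField K] {d : ℕ}
variable (X : CurveOverK K) (f : CurveMor X d) (α : X.Pts)

/-- the fixed field of an automorphism -/
def fixedIF (ρ : Kbar K ≃ₐ[K] Kbar K) : IntermediateField K (Kbar K) :=
  Subalgebra.toIntermediateField (AlgHom.equalizer ρ.toAlgHom (AlgHom.id K (Kbar K)))
    (fun x hx => by
      have hx' : ρ x = x := hx
      show ρ x⁻¹ = x⁻¹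
      rw [map_inv₀, hx'])

theorem mem_fixedIF {ρ : Kbar K ≃ₐ[K] Kbar K} {x : Kbar K} :
    x ∈ fixedIF ρ ↔ ρ x = x := Iff.rfl

/-- an automorphism fixes every level-`n` point iff it fixes `K(f⁻ⁿ(α))` pointwise -/
theorem fix_level_iff (hα : X.fod α = ⊥) (ρ : Kbar K ≃ₐ[K] Kbar K) (n : ℕ) :
    (∀ β : preV f.toFun α n, X.act ρ β.1 = β.1) ↔
      ∀ x ∈ levelField X f.toFun α n, ρ x = x := by
  constructor
  · intro h x hx
    have hle : levelField X f.toFun α n ≤ fixedIF ρ := by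
      apply iSup_le
      intro β
      intro y hy
      exact (X.fod_spec ρ β.1).1 (h β) y hy
    exact hle hx
  · intro h β
    exact (X.fod_spec ρ β.1).2 (fun y hy =>
      h y (le_iSup (fun β : preV f.toFun α n => X.fod β.1) β hy))

theorem permLevel_eq_iff (hα : X.fod α = ⊥) (σ τ : Kbar K ≃ₐ[K] Kbar K) (n : ℕ) :
    permLevel X f α hα σ n = permLevel X f α hα τ n ↔
      ∀ x ∈ levelField X f.toFun α n, σ x = τ x := by
  have key : ∀ x : Kbar K, (τ⁻¹ * σ) x = x ↔ σ x = τ x := by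
    intro x
    constructor
    · intro h
      have := congrArg τ h
      rwa [show ((τ⁻¹ * σ) x) = τ⁻¹ (σ x) from rfl, show τ (τ⁻¹ (σ x)) = σ x from
        τ.apply_symm_apply (σ x)] at this
    · intro h
      show τ⁻¹ (σ x) = x
      rw [h]
      exact τ.symm_apply_apply x
  have keyP : ∀ P : X.Pts, X.act (τ⁻¹ * σ) P = P ↔ X.act σ P = X.act τ P := by
    intro P
    rw [map_mul]
    constructor
    · intro h
      have := congrArg (X.act τ) h
      rwa [Equiv.Perm.mul_apply, ← Equiv.Perm.mul_apply (X.act τ) (X.act τ⁻¹),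
        ← map_mul, mul_inv_cancel, map_one, Equiv.Perm.one_apply] at this
    · intro h
      show X.act τ⁻¹ (X.act σ P) = P
      rw [h, ← Equiv.Perm.mul_apply, ← map_mul, inv_mul_cancel, map_one,
        Equiv.Perm.one_apply]
  constructor
  · intro h x hx
    have hfix : ∀ β : preV f.toFun α n, X.act (τ⁻¹ * σ) β.1 = β.1 := by
      intro β
      apply (keyP β.1).2
      have : (permLevel X f α hα σ n β : X.Pts) = permLevel X f α hα τ n β := by rw [h]
      simpa using this
    exact (key x).1 ((fix_level_iff X f α hα (τ⁻¹ * σ) n).1 hfix x hx)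
  · intro h
    apply Equiv.ext
    intro β
    apply Subtype.ext
    simp only [permLevel_apply]
    rw [← keyP]
    exact (fix_level_iff X f α hα (τ⁻¹ * σ) n).2 (fun x hx => (key x).2 (h x hx)) β

end ArbAux
namespace ArbAux

theorem card_range_eq {A : Type*} {B : Type*} {C : Type*} (F : A → B) (G : A → C)
    (h : ∀ a a', F a = F a' ↔ G a = G a') :
    Nat.card (Set.range F) = Nat.card (Set.range G) := by
  classical
  apply Nat.card_eq_of_bijective (fun b => (⟨G (Classical.choose b.2), ⟨_, rfl⟩⟩ : Set.range G))
  constructor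
  · rintro b b' hb
    have h1 : F (Classical.choose b.2) = b.1 := Classical.choose_spec b.2
    have h2 : F (Classical.choose b'.2) = b'.1 := Classical.choose_spec b'.2
    have : G (Classical.choose b.2) = G (Classical.choose b'.2) := by
      simpa using congrArg Subtype.val hb
    apply Subtype.ext
    rw [← h1, ← h2]
    exact (h _ _).2 this
  · rintro ⟨c, a, rfl⟩
    refine ⟨⟨F a, a, rfl⟩, ?_⟩
    apply Subtype.ext
    show G (Classical.choose (⟨a, rfl⟩ : ∃ y, F y = F a)) = G a
    exact (h _ _).1 (Classical.choose_spec (⟨a, rfl⟩ : ∃ y, F y = F a))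

variable {K : Type*} [Field K] [NumberField K] {d : ℕ}
variable (X : CurveOverK K) (f : CurveMor X d) (α : X.Pts)

instance instFinDimLevelField (n : ℕ) :
    FiniteDimensional K (levelField X f.toFun α n) := by
  haveI : ∀ β : preV f.toFun α n, FiniteDimensional K (X.fod β.1) := fun β => X.fod_fin β.1
  haveI : Finite (preV f.toFun α n) := instFiniteV X f α n
  exact IntermediateField.finiteDimensional_iSup_of_finite

/-- restriction of an automorphism to the level-`n` field -/
def res (n : ℕ) (σ : Kbar K ≃ₐ[K] Kbar K) : levelField X f.toFun α n →ₐ[K] Kbar K :=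
  σ.toAlgHom.comp (levelField X f.toFun α n).val

theorem res_eq_iff (n : ℕ) (σ τ : Kbar K ≃ₐ[K] Kbar K) :
    res X f α n σ = res X f α n τ ↔ ∀ x ∈ levelField X f.toFun α n, σ x = τ x := by
  constructor
  · intro h x hx
    exact congrArg (fun F : levelField X f.toFun α n →ₐ[K] Kbar K => F ⟨x, hx⟩) h
  · intro h
    apply AlgHom.ext
    rintro ⟨x, hx⟩
    exact h x hx

theorem res_surjective (n : ℕ) : Function.Surjective (res X f α n) := by
  intro φ
  have hbij : Function.Bijective (φ.liftNormal (Kbar K)) :=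
    Algebra.IsAlgebraic.algHom_bijective _
  refine ⟨AlgEquiv.ofBijective _ hbij, ?_⟩
  apply AlgHom.ext
  rintro ⟨x, hx⟩
  show (φ.liftNormal (Kbar K)) x = φ ⟨x, hx⟩
  have := φ.liftNormal_commutes (Kbar K) (⟨x, hx⟩ : levelField X f.toFun α n)
  simpa using this

theorem card_range_res (n : ℕ) :
    Nat.card (Set.range (res X f α n)) =
      Module.finrank K (levelField X f.toFun α n) := by
  rw [Set.range_eq_univ.2 (res_surjective X f α n)]
  haveI : FiniteDimensional K (levelField X f.toFun α n) := instFinDimLevelField X f α n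
  rw [Nat.card_univ, Nat.card_eq_fintype_card, AlgHom.card]

theorem card_image_restr (hα : X.fod α = ⊥) (n : ℕ) :
    Nat.card (restr n '' (Set.range (gmap X f α hα))) =
      Module.finrank K (levelField X f.toFun α n) := by
  rw [← Set.range_comp, ← card_range_res X f α n]
  apply card_range_eq
  intro σ τ
  show restr n (gmap X f α hα σ) = restr n (gmap X f α hα τ) ↔ _
  rw [res_eq_iff, ← permLevel_eq_iff X f α hα]
  constructor
  · intro h
    exact congrFun h ⟨n, Nat.lt_succ_self n⟩
  · intro h
    funext k
    exact permLevel_eq_of_top X f α hα h (by omega)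

end ArbAux
namespace ArbAux

variable {K : Type*} [Field K] [NumberField K] {d : ℕ}
variable (X : CurveOverK K) (f : CurveMor X d) (α : X.Pts)

/-- the fiber of the morphism above a point -/
abbrev Fib (β : X.Pts) : Type _ := {Q : X.Pts // f.toFun Q = β}

theorem fib_card_le (β : X.Pts) : Nat.card (Fib X f β) ≤ d := f.fiber_ub β

/-- an embedding of each fiber into `Fin d` -/
def fibEmb (hd : 2 ≤ d) (β : X.Pts) : Fib X f β ↪ Fin d := by
  haveI : Finite (Fib X f β) := (fiber_finite X f β).1
  haveI : Fintype (Fib X f β) := Fintype.ofFinite _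
  have h : Fintype.card (Fib X f β) ≤ Fintype.card (Fin d) := by
    rw [Fintype.card_fin, ← Nat.card_eq_fintype_card]
    exact fib_card_le X f β
  exact (Function.Embedding.nonempty_of_card_le h).some

/-- a retraction for `fibEmb` -/
def fibRet (hd : 2 ≤ d) (β : X.Pts) : Fin d → Fib X f β := by
  haveI : Nonempty (Fib X f β) := (fiber_finite X f β).2
  exact Function.invFun (fibEmb X f hd β)

theorem fibRet_emb (hd : 2 ≤ d) (β : X.Pts) (Q : Fib X f β) :
    fibRet X f hd β (fibEmb X f hd β Q) = Q := by
  haveI : Nonempty (Fib X f β) := (fiber_finite X f β).2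
  exact Function.leftInverse_invFun (fibEmb X f hd β).injective Q

/-- the induced map on fibers -/
def mapFib (hα : X.fod α = ⊥) (σ : Kbar K ≃ₐ[K] Kbar K) {n : ℕ} (β : preV f.toFun α n)
    (Q : Fib X f β.1) : Fib X f ((permLevel X f α hα σ n β : X.Pts)) :=
  ⟨X.act σ Q.1, by rw [f.equivariant, Q.2]; rfl⟩

/-- the coding function on fibers used for the counting injection -/
def code (hα : X.fod α = ⊥) (hd : 2 ≤ d) (σ : Kbar K ≃ₐ[K] Kbar K) (n : ℕ)
    (β : preV f.toFun α n) (i : Fin d) : Fin d :=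
  fibEmb X f hd _ (mapFib X f α hα σ β (fibRet X f hd β.1 i))

theorem recover (hα : X.fod α = ⊥) (hd : 2 ≤ d) (σ : Kbar K ≃ₐ[K] Kbar K) (n : ℕ)
    (γ : preV f.toFun α (n+1)) :
    X.act σ γ.1 = (fibRet X f hd
        ((permLevel X f α hα σ n (preParent f.toFun α n γ) : X.Pts))
        (code X f α hα hd σ n (preParent f.toFun α n γ)
          (fibEmb X f hd _ (⟨γ.1, rfl⟩ : Fib X f (preParent f.toFun α n γ).1)))).1 := by
  unfold code
  rw [fibRet_emb, fibRet_emb]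
  rfl

/-- the injection showing the level-(n+1) restriction count is controlled -/
theorem cardS_succ_le (hα : X.fod α = ⊥) (hd : 2 ≤ d) (n : ℕ) :
    Nat.card (Set.range (fun σ : Kbar K ≃ₐ[K] Kbar K => permLevel X f α hα σ (n+1))) ≤
      Nat.card (Set.range (fun σ : Kbar K ≃ₐ[K] Kbar K => permLevel X f α hα σ n)) *
        d ^ (d * d ^ n) := by
  classical
  set Sn := Set.range (fun σ : Kbar K ≃ₐ[K] Kbar K => permLevel X f α hα σ n) with hSn
  set Sn1 := Set.range (fun σ : Kbar K ≃ₐ[K] Kbar K => permLevel X f α hα σ (n+1)) with hSn1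
  have hJinj : Function.Injective (fun t : Sn1 =>
      ((⟨permLevel X f α hα (Classical.choose t.2) n, ⟨_, rfl⟩⟩ : Sn),
        code X f α hα hd (Classical.choose t.2) n)) := by
    intro t t' h
    have hσ : permLevel X f α hα (Classical.choose t.2) (n+1) = t.1 :=
      Classical.choose_spec t.2
    have hσ' : permLevel X f α hα (Classical.choose t'.2) (n+1) = t'.1 :=
      Classical.choose_spec t'.2
    have h1 : permLevel X f α hα (Classical.choose t.2) n
        = permLevel X f α hα (Classical.choose t'.2) n := by
      have := congrArg Prod.fst h
      simpa using congrArg Subtype.val this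
    have h2 : code X f α hα hd (Classical.choose t.2) n
        = code X f α hα hd (Classical.choose t'.2) n := congrArg Prod.snd h
    have key : ∀ γ : preV f.toFun α (n+1),
        X.act (Classical.choose t.2) γ.1 = X.act (Classical.choose t'.2) γ.1 := by
      intro γ
      rw [recover X f α hα hd _ n γ, recover X f α hα hd _ n γ, h1, h2]
    apply Subtype.ext
    rw [← hσ, ← hσ']
    apply Equiv.ext
    intro γ
    exact Subtype.ext (key γ)
  calc Nat.card Sn1
      ≤ Nat.card (Sn × (preV f.toFun α n → Fin d → Fin d)) :=
        Nat.card_le_card_of_injective _ hJinj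
    _ = Nat.card Sn * Nat.card (preV f.toFun α n → Fin d → Fin d) := Nat.card_prod _ _
    _ ≤ Nat.card Sn * d ^ (d * d ^ n) := by
        apply Nat.mul_le_mul_left
        haveI : Finite (preV f.toFun α n) := instFiniteV X f α n
        rw [Nat.card_fun, Nat.card_fun, Nat.card_eq_fintype_card (α := Fin d),
          Fintype.card_fin, ← pow_mul]
        apply Nat.pow_le_pow_right (by omega)
        have := card_V_le X f α n hd
        exact Nat.mul_le_mul_left d this

theorem cardS_le (hα : X.fod α = ⊥) (hd : 2 ≤ d) (n : ℕ) :
    Nat.card (Set.range (fun σ : Kbar K ≃ₐ[K] Kbar K => permLevel X f α hα σ n)) ≤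
      d ^ (2 * d ^ n) := by
  induction n with
  | zero =>
      haveI := instSubsingletonV0 X f α
      haveI : Subsingleton (Equiv.Perm (preV f.toFun α 0)) := by
        constructor; intro a b; apply Equiv.ext; intro x; apply Subsingleton.elim
      haveI : Subsingleton
          (Set.range (fun σ : Kbar K ≃ₐ[K] Kbar K => permLevel X f α hα σ 0)) :=
        ⟨fun a b => Subtype.ext (Subsingleton.elim _ _)⟩
      have h1 : Nat.card
          (Set.range (fun σ : Kbar K ≃ₐ[K] Kbar K => permLevel X f α hα σ 0)) ≤ 1 :=
        le_of_eq (Nat.card_eq_one_iff_unique.2 ⟨inferInstance, ⟨⟨_, ⟨1, rfl⟩⟩⟩⟩)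
      calc _ ≤ 1 := h1
        _ ≤ d ^ (2 * d ^ 0) := Nat.one_le_pow _ _ (by omega)
  | succ n ih =>
      calc _ ≤ _ := cardS_succ_le X f α hα hd n
        _ ≤ d ^ (2 * d ^ n) * d ^ (d * d ^ n) := Nat.mul_le_mul_right _ ih
        _ = d ^ (2 * d ^ n + d * d ^ n) := by rw [pow_add]
        _ ≤ d ^ (2 * d ^ (n+1)) := by
            apply Nat.pow_le_pow_right (by omega)
            have : 2 * d ^ n ≤ d * d ^ n := Nat.mul_le_mul_right _ hd
            calc 2 * d ^ n + d * d ^ n ≤ d * d ^ n + d * d ^ n := by omega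
              _ = 2 * d ^ (n+1) := by ring
end ArbAux
namespace ArbAux
open Filter

theorem bddU {u : ℕ → ℝ} {C : ℝ} (h : ∀ᶠ n in atTop, u n ≤ C) :
    IsBoundedUnder (· ≤ ·) atTop u := ⟨C, h⟩

theorem bddL {u : ℕ → ℝ} {C : ℝ} (h : ∀ᶠ n in atTop, C ≤ u n) :
    IsBoundedUnder (· ≥ ·) atTop u := ⟨C, h⟩

theorem lim_eq_pair {u v : ℕ → ℝ} {C : ℝ}
    (hv0 : ∀ n, 0 ≤ v n) (hvC : ∀ n, v n ≤ C)
    (hle : ∀ᶠ n in atTop, v n ≤ u n)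
    (hub : ∀ ε : ℝ, 0 < ε → ∀ᶠ n in atTop, u n ≤ v n + ε) :
    Filter.liminf u Filter.atTop = Filter.liminf v Filter.atTop ∧
      Filter.limsup u Filter.atTop = Filter.limsup v Filter.atTop := by
  have hvU : IsBoundedUnder (· ≤ ·) atTop v := bddU (Eventually.of_forall hvC)
  have hvL : IsBoundedUnder (· ≥ ·) atTop v := bddL (Eventually.of_forall hv0)
  have hvCo_ge : IsCoboundedUnder (· ≥ ·) atTop v := hvU.isCoboundedUnder_ge
  have hvCo_le : IsCoboundedUnder (· ≤ ·) atTop v := hvL.isCoboundedUnder_le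
  have hu0 : ∀ᶠ n in atTop, 0 ≤ u n := by
    filter_upwards [hle] with n h using (hv0 n).trans h
  have huC : ∀ᶠ n in atTop, u n ≤ C + 1 := by
    filter_upwards [hub 1 one_pos] with n h using h.trans (by linarith [hvC n])
  have huU : IsBoundedUnder (· ≤ ·) atTop u := bddU huC
  have huL : IsBoundedUnder (· ≥ ·) atTop u := bddL hu0
  have huCo_ge : IsCoboundedUnder (· ≥ ·) atTop u := huU.isCoboundedUnder_ge
  have huCo_le : IsCoboundedUnder (· ≤ ·) atTop u := huL.isCoboundedUnder_le
  constructor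
  · apply le_antisymm
    · apply le_of_forall_pos_le_add
      intro ε hε
      have h1 : liminf u atTop ≤ liminf (fun n => v n + ε) atTop := by
        refine liminf_le_liminf (hub ε hε) huL ?_
        exact (bddU (Eventually.of_forall
          (fun n => by linarith [hvC n] : ∀ n, v n + ε ≤ C + ε))).isCoboundedUnder_ge
      rwa [liminf_add_const atTop v ε hvCo_ge hvL] at h1
    · exact liminf_le_liminf hle hvL huCo_ge
  · apply le_antisymm
    · apply le_of_forall_pos_le_add
      intro ε hε
      have h1 : limsup u atTop ≤ limsup (fun n => v n + ε) atTop := by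
        refine limsup_le_limsup (hub ε hε) huCo_le ?_
        exact bddU (Eventually.of_forall
          (fun n => by linarith [hvC n] : ∀ n, v n + ε ≤ C + ε))
      rwa [limsup_add_const atTop v ε hvU hvCo_le] at h1
    · exact limsup_le_limsup hle hvCo_le huU

theorem liminf_cmul {c C : ℝ} (hc : 0 < c) (v : ℕ → ℝ)
    (h0 : ∀ n, 0 ≤ v n) (hC : ∀ n, v n ≤ C) :
    Filter.liminf (fun n => c * v n) Filter.atTop = c * Filter.liminf v Filter.atTop := by
  have hvU : IsBoundedUnder (· ≤ ·) atTop v := bddU (Eventually.of_forall hC)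
  have hvL : IsBoundedUnder (· ≥ ·) atTop v := bddL (Eventually.of_forall h0)
  have hgU : IsBoundedUnder (· ≤ ·) atTop (fun n => c * v n) :=
    bddU (Eventually.of_forall (fun n => mul_le_mul_of_nonneg_left (hC n) hc.le))
  have hgL : IsBoundedUnder (· ≥ ·) atTop (fun n => c * v n) :=
    bddL (Eventually.of_forall (fun n => mul_nonneg hc.le (h0 n)))
  exact ((OrderIso.mulLeft₀ c hc).liminf_apply hvL hvU.isCoboundedUnder_ge
    hgL hgU.isCoboundedUnder_ge).symm

theorem limsup_cmul {c C : ℝ} (hc : 0 < c) (v : ℕ → ℝ)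
    (h0 : ∀ n, 0 ≤ v n) (hC : ∀ n, v n ≤ C) :
    Filter.limsup (fun n => c * v n) Filter.atTop = c * Filter.limsup v Filter.atTop := by
  have hvU : IsBoundedUnder (· ≤ ·) atTop v := bddU (Eventually.of_forall hC)
  have hvL : IsBoundedUnder (· ≥ ·) atTop v := bddL (Eventually.of_forall h0)
  have hgU : IsBoundedUnder (· ≤ ·) atTop (fun n => c * v n) :=
    bddU (Eventually.of_forall (fun n => mul_le_mul_of_nonneg_left (hC n) hc.le))
  have hgL : IsBoundedUnder (· ≥ ·) atTop (fun n => c * v n) :=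
    bddL (Eventually.of_forall (fun n => mul_nonneg hc.le (h0 n)))
  exact ((OrderIso.mulLeft₀ c hc).limsup_apply hvU hvL.isCoboundedUnder_le
    hgU hgL.isCoboundedUnder_le).symm

end ArbAux
namespace ArbAux

variable {K : Type*} [Field K] [NumberField K] {d : ℕ}
variable (X : CurveOverK K) (f : CurveMor X d) (α : X.Pts)

theorem finrank_eq_cardS (hα : X.fod α = ⊥) (n : ℕ) :
    Nat.card (Set.range (fun σ : Kbar K ≃ₐ[K] Kbar K => permLevel X f α hα σ n)) =
      Module.finrank K (levelField X f.toFun α n) := by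
  rw [← card_range_res X f α n]
  apply card_range_eq
  intro σ τ
  exact (permLevel_eq_iff X f α hα σ τ n).trans (res_eq_iff X f α n σ τ).symm

theorem coverNum_eq (hα : X.fod α = ⊥) (hd : 2 ≤ d) (n : ℕ) :
    coverNum d (arbGal (K := K) (fun σ => ⇑(X.act σ)) ⊥ f.toFun α) n =
      Module.finrank K (levelField X f.toFun α n) := by
  haveI := instSubsingletonV0 X f α
  haveI : ∀ k, Finite (preV f.toFun α k) := fun k => instFiniteV X f α k
  rw [arbGal_eq_range X f α hα, coverNum_eq_card_image hd, card_image_restr X f α hα n]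

theorem finrank_lb (n : ℕ) : 1 ≤ Module.finrank K (levelField X f.toFun α n) :=
  Module.finrank_pos

theorem finrank_ub (hα : X.fod α = ⊥) (hd : 2 ≤ d) (n : ℕ) :
    Module.finrank K (levelField X f.toFun α n) ≤ d ^ (2 * d ^ n) := by
  rw [← finrank_eq_cardS X f α hα n]
  exact cardS_le X f α hα hd n

end ArbAux

open ArbAux Filter in
theorem arboreal_curve_dim_formula' {K : Type*} [Field K] [NumberField K] {d : ℕ}
    (hd : 2 ≤ d) (X : CurveOverK K) (hgenus : X.genus = 0 ∨ X.genus = 1)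
    (f : CurveMor X d) (α : X.Pts) (hα : X.fod α = ⊥) :
    dimLower d (arbGal (K := K) (fun σ => ⇑(X.act σ)) ⊥ f.toFun α) =
        ((d : ℝ) - 1) / Real.log (d.factorial : ℝ) *
          Filter.liminf (fun n : ℕ =>
            Real.log (Module.finrank K (levelField X f.toFun α n) : ℝ) / (d : ℝ) ^ n)
            Filter.atTop ∧
      dimUpper d (arbGal (K := K) (fun σ => ⇑(X.act σ)) ⊥ f.toFun α) =
        ((d : ℝ) - 1) / Real.log (d.factorial : ℝ) *
          Filter.limsup (fun n : ℕ =>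
            Real.log (Module.finrank K (levelField X f.toFun α n) : ℝ) / (d : ℝ) ^ n)
            Filter.atTop ∧
      ∀ L : ℝ, Filter.Tendsto (fun n : ℕ =>
            Real.log (Module.finrank K (levelField X f.toFun α n) : ℝ) / (d : ℝ) ^ n)
            Filter.atTop (nhds L) →
        HasDim d (arbGal (K := K) (fun σ => ⇑(X.act σ)) ⊥ f.toFun α)
          (((d : ℝ) - 1) / Real.log (d.factorial : ℝ) * L) := by
  classical
  set G := arbGal (K := K) (fun σ => ⇑(X.act σ)) ⊥ f.toFun α with hG
  set D : ℕ → ℕ := fun n => Module.finrank K (levelField X f.toFun α n) with hD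
  set b : ℕ → ℝ := fun n =>
    Real.log (Module.finrank K (levelField X f.toFun α n) : ℝ) / (d : ℝ) ^ n with hb
  set q : ℕ → ℝ := fun n =>
    Real.log (coverNum d G n : ℝ) / Real.log (1 / treeScale d n) with hq
  have hd1 : (1:ℝ) < (d:ℝ) := by exact_mod_cast (by omega : 1 < d)
  have hfac : (1:ℝ) < (d.factorial : ℝ) := one_lt_factorial hd
  have hlogfac : 0 < Real.log (d.factorial : ℝ) := Real.log_pos hfac
  set c : ℝ := ((d : ℝ) - 1) / Real.log (d.factorial : ℝ) with hc
  have hcpos : 0 < c := div_pos (by linarith) hlogfac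
  have hlogd : 0 ≤ Real.log (d:ℝ) := Real.log_nonneg hd1.le
  have hD1 : ∀ n, (1:ℝ) ≤ (D n : ℝ) := fun n => by exact_mod_cast finrank_lb X f α n
  have hlogD0 : ∀ n, 0 ≤ Real.log (D n : ℝ) := fun n => Real.log_nonneg (hD1 n)
  have hlogDub : ∀ n, Real.log (D n : ℝ) ≤ 2 * (d:ℝ)^n * Real.log (d:ℝ) := by
    intro n
    have h1 : (D n : ℝ) ≤ ((d : ℝ) ^ (2 * d ^ n)) := by
      have := finrank_ub X f α hα hd n
      calc (D n : ℝ) ≤ ((d ^ (2 * d ^ n) : ℕ) : ℝ) := by exact_mod_cast this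
        _ = (d : ℝ) ^ (2 * d ^ n) := by push_cast; ring
    calc Real.log (D n : ℝ) ≤ Real.log ((d:ℝ) ^ (2 * d ^ n)) :=
          Real.log_le_log (by linarith [hD1 n]) h1
      _ = ((2 * d ^ n : ℕ) : ℝ) * Real.log (d:ℝ) := by rw [Real.log_pow]
      _ = 2 * (d:ℝ)^n * Real.log (d:ℝ) := by push_cast; ring
  have hb0 : ∀ n, 0 ≤ b n := fun n => div_nonneg (hlogD0 n) (by positivity)
  have hbC : ∀ n, b n ≤ 2 * Real.log (d:ℝ) := by
    intro n
    rw [hb]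
    rw [div_le_iff₀ (by positivity : (0:ℝ) < (d:ℝ)^n)]
    calc Real.log (D n : ℝ) ≤ 2 * (d:ℝ)^n * Real.log (d:ℝ) := hlogDub n
      _ = 2 * Real.log (d:ℝ) * (d:ℝ)^n := by ring
  -- the formula for q at positive levels
  have hlogscale : ∀ n : ℕ, Real.log (1 / treeScale d n) =
      (scaleExp d n : ℝ) * Real.log (d.factorial : ℝ) := by
    intro n
    have : (1 : ℝ) / treeScale d n = (d.factorial : ℝ) ^ scaleExp d n := by
      rw [treeScale, one_div, inv_inv]
    rw [this, Real.log_pow]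
  have hscale : ∀ n : ℕ, (scaleExp d n : ℝ) = ((d:ℝ)^n - 1) / ((d:ℝ) - 1) := by
    intro n
    have : (scaleExp d n : ℝ) = ∑ i ∈ Finset.range n, (d:ℝ) ^ i := by
      rw [scaleExp]; push_cast; ring
    rw [this, geom_sum_eq (by linarith : (d:ℝ) ≠ 1) n]
  have hqf : ∀ n : ℕ, 1 ≤ n → q n = c * (Real.log (D n : ℝ) / ((d:ℝ)^n - 1)) := by
    intro n hn
    have hX : (1:ℝ) < (d:ℝ)^n := one_lt_pow₀ hd1 (by omega)
    rw [hq]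
    simp only
    rw [coverNum_eq X f α hα hd n, hlogscale n, hscale n, hc]
    have h1 : (d:ℝ)^n - 1 ≠ 0 := by linarith
    have h2 : (d:ℝ) - 1 ≠ 0 := by linarith
    have h3 : Real.log (d.factorial : ℝ) ≠ 0 := ne_of_gt hlogfac
    field_simp
    ring
  -- comparisons
  have hle : ∀ᶠ n in atTop, c * b n ≤ q n := by
    filter_upwards [eventually_ge_atTop 1] with n hn
    rw [hqf n hn, hb]
    apply mul_le_mul_of_nonneg_left _ hcpos.le
    have hX : (1:ℝ) < (d:ℝ)^n := one_lt_pow₀ hd1 (by omega)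
    exact div_le_div_of_nonneg_left (hlogD0 n) (by linarith) (by linarith)
  have herr : Tendsto (fun n : ℕ => 2 * c * Real.log (d:ℝ) / ((d:ℝ)^n - 1)) atTop (nhds 0) := by
    apply Tendsto.div_atTop (tendsto_const_nhds)
    have h1 : Tendsto (fun n : ℕ => (d:ℝ)^n) atTop atTop := tendsto_pow_atTop_atTop_of_one_lt hd1
    exact tendsto_atTop_add_const_right atTop (-1) h1
  have hub : ∀ ε : ℝ, 0 < ε → ∀ᶠ n in atTop, q n ≤ c * b n + ε := by
    intro ε hε
    have hev : ∀ᶠ n in atTop, 2 * c * Real.log (d:ℝ) / ((d:ℝ)^n - 1) < ε :=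
      herr.eventually (eventually_lt_nhds hε)
    filter_upwards [eventually_ge_atTop 1, hev] with n hn hevn
    rw [hqf n hn, hb]
    simp only
    set X' : ℝ := (d:ℝ)^n with hX'
    have hX : (1:ℝ) < X' := one_lt_pow₀ hd1 (by omega)
    have hL := hlogD0 n
    have hLub := hlogDub n
    have hX0 : X' ≠ 0 := by linarith
    have hX10 : X' - 1 ≠ 0 := by linarith
    set L' : ℝ := Real.log (D n : ℝ)
    have key : L' / (X' - 1) - L' / X' = L' / (X' * (X' - 1)) := by
      field_simp
      ring
    have key2 : L' / (X' * (X' - 1)) ≤ 2 * Real.log (d:ℝ) / (X' - 1) := by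
      have h2 : L' / (X' * (X' - 1)) ≤ (2 * X' * Real.log (d:ℝ)) / (X' * (X' - 1)) := by
        apply div_le_div_of_nonneg_right ?_ (by nlinarith)
        · exact hLub
      have h3 : (2 * X' * Real.log (d:ℝ)) / (X' * (X' - 1)) = 2 * Real.log (d:ℝ) / (X' - 1) := by
        field_simp
      rw [h3] at h2
      exact h2
    have : c * (L' / (X' - 1)) ≤ c * (L' / X') + 2 * c * Real.log (d:ℝ) / (X' - 1) := by
      have := mul_le_mul_of_nonneg_left ((key ▸ key2 : L' / (X' - 1) - L' / X' ≤ _)) hcpos.le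
      have h4 : c * (2 * Real.log (d:ℝ) / (X' - 1)) = 2 * c * Real.log (d:ℝ) / (X' - 1) := by
        ring
      nlinarith [this]
    calc c * (L' / (X' - 1)) ≤ c * (L' / X') + 2 * c * Real.log (d:ℝ) / (X' - 1) := this
      _ ≤ c * (L' / X') + ε := by linarith
  have main := lim_eq_pair (u := q) (v := fun n => c * b n) (C := c * (2 * Real.log (d:ℝ)))
    (fun n => mul_nonneg hcpos.le (hb0 n))
    (fun n => mul_le_mul_of_nonneg_left (hbC n) hcpos.le) hle hub
  have hlimeq : Filter.liminf q atTop = c * Filter.liminf b atTop := by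
    rw [main.1, liminf_cmul hcpos b hb0 hbC]
  have hlimsupeq : Filter.limsup q atTop = c * Filter.limsup b atTop := by
    rw [main.2, limsup_cmul hcpos b hb0 hbC]
  have hdimL : dimLower d G = Filter.liminf q atTop := rfl
  have hdimU : dimUpper d G = Filter.limsup q atTop := rfl
  refine ⟨hdimL.trans hlimeq, hdimU.trans hlimsupeq, ?_⟩
  intro L hL
  have h1 : Filter.liminf b atTop = L := hL.liminf_eq
  have h2 : Filter.limsup b atTop = L := hL.limsup_eq
  exact ⟨hdimL.trans (hlimeq.trans (by rw [h1])), hdimU.trans (hlimsupeq.trans (by rw [h2]))⟩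
theorem arboreal_curve_dim_formula {K : Type*} [Field K] [NumberField K] {d : ℕ}
    (hd : 2 ≤ d) (X : CurveOverK K) (hgenus : X.genus = 0 ∨ X.genus = 1)
    (f : CurveMor X d) (α : X.Pts) (hα : X.fod α = ⊥) :
    dimLower d (arbGal (K := K) (fun σ => ⇑(X.act σ)) ⊥ f.toFun α) =
        ((d : ℝ) - 1) / Real.log (d.factorial : ℝ) *
          Filter.liminf (fun n : ℕ =>
            Real.log (Module.finrank K (levelField X f.toFun α n) : ℝ) / (d : ℝ) ^ n)
            Filter.atTop ∧
      dimUpper d (arbGal (K := K) (fun σ => ⇑(X.act σ)) ⊥ f.toFun α) =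
        ((d : ℝ) - 1) / Real.log (d.factorial : ℝ) *
          Filter.limsup (fun n : ℕ =>
            Real.log (Module.finrank K (levelField X f.toFun α n) : ℝ) / (d : ℝ) ^ n)
            Filter.atTop ∧
      ∀ L : ℝ, Filter.Tendsto (fun n : ℕ =>
            Real.log (Module.finrank K (levelField X f.toFun α n) : ℝ) / (d : ℝ) ^ n)
            Filter.atTop (nhds L) →
        HasDim d (arbGal (K := K) (fun σ => ⇑(X.act σ)) ⊥ f.toFun α)
          (((d : ℝ) - 1) / Real.log (d.factorial : ℝ) * L) := by
  exact arboreal_curve_dim_formula' hd X hgenus f α hα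
end
end

section
/- Let K be a number field, let X/K be a complete nonsingular curve of genus 0 or 1, let f : X → X be a morphism of degree d ≥ 2 defined over K, and let α ∈ X(K). Let K′/K be a finite extension, and let G_{f,α} and G′_{f,α} denote the images of the arboreal Galois representations of the pair (f,α) over the base fields K and K′ respectively. Then dim_lower(G′_{f,α}) = dim_lower(G_{f,α}) and dim_upper(G′_{f,α}) = dim_upper(G_{f,α}). -/
open scoped Classical

noncomputable section AuxProof
open Filter

/-! ### Sequence lemmas: liminf/limsup invariance under o(1) perturbation -/

private lemma auxSSup_le_sSup_of_shift {S T : Set ℝ}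
    (hST : ∀ c ∈ S, ∀ ε : ℝ, 0 < ε → c - ε ∈ T)
    (hTS : ∀ c ∈ T, ∀ ε : ℝ, 0 < ε → c - ε ∈ S) :
    sSup S ≤ sSup T := by
  rcases S.eq_empty_or_nonempty with hS | hS
  · have hT : T = ∅ := by
      by_contra h
      obtain ⟨c, hc⟩ := Set.nonempty_iff_ne_empty.mpr h
      have := hTS c hc 1 one_pos
      simp [hS] at this
    simp [hS, hT]
  · by_cases hbT : BddAbove T
    · have : ∀ c ∈ S, c ≤ sSup T := by
        intro c hc
        apply le_of_forall_sub_le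
        intro ε hε
        exact le_csSup hbT (hST c hc ε hε)
      exact csSup_le hS this
    · have hbS : ¬ BddAbove S := by
        rintro ⟨M, hM⟩
        apply hbT
        refine ⟨M + 1, fun c hc => ?_⟩
        have := hM (hTS c hc 1 one_pos)
        linarith
      rw [Real.sSup_of_not_bddAbove hbS, Real.sSup_of_not_bddAbove hbT]

private lemma auxSInf_le_sInf_of_shift {S T : Set ℝ}
    (hST : ∀ c ∈ S, ∀ ε : ℝ, 0 < ε → c + ε ∈ T)
    (hTS : ∀ c ∈ T, ∀ ε : ℝ, 0 < ε → c + ε ∈ S) :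
    sInf S ≤ sInf T := by
  rcases T.eq_empty_or_nonempty with hT | hT
  · have hS : S = ∅ := by
      by_contra h
      obtain ⟨c, hc⟩ := Set.nonempty_iff_ne_empty.mpr h
      have := hST c hc 1 one_pos
      simp [hT] at this
    simp [hS, hT]
  · by_cases hbS : BddBelow S
    · refine le_csInf hT fun c hc => ?_
      apply le_of_forall_sub_le
      intro ε hε
      have := csInf_le hbS (hTS c hc ε hε)
      linarith
    · have hbT : ¬ BddBelow T := by
        rintro ⟨M, hM⟩
        apply hbS
        refine ⟨M - 1, fun c hc => ?_⟩
        have := hM (hST c hc 1 one_pos)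
        linarith
      rw [Real.sInf_of_not_bddBelow hbS, Real.sInf_of_not_bddBelow hbT]

private lemma auxShift_lower {u v : ℕ → ℝ}
    (h : Tendsto (fun n => v n - u n) atTop (nhds 0)) :
    ∀ c ∈ {a : ℝ | ∀ᶠ n in atTop, a ≤ u n}, ∀ ε : ℝ, 0 < ε →
      (c - ε) ∈ {a : ℝ | ∀ᶠ n in atTop, a ≤ v n} := by
  intro c hc ε hε
  have h2 : ∀ᶠ n in atTop, |v n - u n| < ε := by
    have := (Metric.tendsto_nhds.mp h) ε hε
    simpa [Real.dist_eq] using this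
  filter_upwards [hc, h2] with n h1 h2
  have := (abs_lt.mp h2).1
  linarith

private lemma auxShift_upper {u v : ℕ → ℝ}
    (h : Tendsto (fun n => v n - u n) atTop (nhds 0)) :
    ∀ c ∈ {a : ℝ | ∀ᶠ n in atTop, u n ≤ a}, ∀ ε : ℝ, 0 < ε →
      (c + ε) ∈ {a : ℝ | ∀ᶠ n in atTop, v n ≤ a} := by
  intro c hc ε hε
  have h2 : ∀ᶠ n in atTop, |v n - u n| < ε := by
    have := (Metric.tendsto_nhds.mp h) ε hε
    simpa [Real.dist_eq] using this
  filter_upwards [hc, h2] with n h1 h2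
  have := (abs_lt.mp h2).2
  linarith

private lemma auxLiminf_eq {u v : ℕ → ℝ}
    (h : Tendsto (fun n => v n - u n) atTop (nhds 0)) :
    Filter.liminf u Filter.atTop = Filter.liminf v Filter.atTop := by
  have h' : Tendsto (fun n => u n - v n) atTop (nhds 0) := by
    have := h.neg
    simpa using this
  rw [Filter.liminf_eq, Filter.liminf_eq]
  exact le_antisymm (auxSSup_le_sSup_of_shift (auxShift_lower h) (auxShift_lower h'))
    (auxSSup_le_sSup_of_shift (auxShift_lower h') (auxShift_lower h))

private lemma auxLimsup_eq {u v : ℕ → ℝ}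
    (h : Tendsto (fun n => v n - u n) atTop (nhds 0)) :
    Filter.limsup u Filter.atTop = Filter.limsup v Filter.atTop := by
  have h' : Tendsto (fun n => u n - v n) atTop (nhds 0) := by
    have := h.neg
    simpa using this
  rw [Filter.limsup_eq, Filter.limsup_eq]
  exact le_antisymm (auxSInf_le_sInf_of_shift (auxShift_upper h) (auxShift_upper h'))
    (auxSInf_le_sInf_of_shift (auxShift_upper h') (auxShift_upper h))

/-! ### Tree metric facts -/

private lemma auxTreeScale_nonneg (d n : ℕ) : 0 ≤ treeScale d n := by
  unfold treeScale
  positivity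

private lemma auxTreeDist_le_of_agree {V : ℕ → Type*} {d n : ℕ}
    {σ τ : ∀ k, Equiv.Perm (V k)} (h : AgreeUpTo n σ τ) :
    treeDist d σ τ ≤ treeScale d n := by
  apply csInf_le
  · refine ⟨0, ?_⟩
    rintro x ⟨m, _, rfl⟩
    exact auxTreeScale_nonneg d m
  · exact ⟨n, h, rfl⟩

private lemma auxTreeDist_mul_left {V : ℕ → Type*} (d : ℕ)
    (g σ τ : ∀ k, Equiv.Perm (V k)) :
    treeDist d (g * σ) (g * τ) = treeDist d σ τ := by
  unfold treeDist
  congr 1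
  ext x
  have hagree : ∀ n, AgreeUpTo n (g * σ) (g * τ) ↔ AgreeUpTo n σ τ := by
    intro n
    unfold AgreeUpTo
    refine forall_congr' fun k => imp_congr_right fun _ => ?_
    simp [Pi.mul_apply, mul_right_inj]
  constructor
  · rintro ⟨n, ha, rfl⟩; exact ⟨n, (hagree n).mp ha, rfl⟩
  · rintro ⟨n, ha, rfl⟩; exact ⟨n, (hagree n).mpr ha, rfl⟩

/-! ### Covering number facts -/

private lemma auxCoverSet_nonempty {V : ℕ → Type*} [∀ k, Finite (V k)] (d n : ℕ)
    (G : Set (∀ k, Equiv.Perm (V k))) :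
    {m : ℕ | ∃ s : Finset (∀ k, Equiv.Perm (V k)), s.card = m ∧
      G ⊆ ⋃ σ ∈ s, {τ | treeDist d σ τ ≤ treeScale d n}}.Nonempty := by
  classical
  let r : (∀ k, Equiv.Perm (V k)) → (∀ k : Fin (n + 1), Equiv.Perm (V k.1)) :=
    fun σ k => σ k.1
  have hfin : (r '' G).Finite := Set.toFinite _
  let s : Finset (∀ k, Equiv.Perm (V k)) :=
    hfin.toFinset.image (fun y => if h : ∃ σ ∈ G, r σ = y then h.choose else 1)
  refine ⟨s.card, s, rfl, ?_⟩
  intro σ hσ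
  have hex : ∃ τ ∈ G, r τ = r σ := ⟨σ, hσ, rfl⟩
  have hcs : (if h : ∃ τ ∈ G, r τ = r σ then h.choose else 1) ∈ s :=
    Finset.mem_image.mpr ⟨r σ, hfin.mem_toFinset.mpr ⟨σ, hσ, rfl⟩, rfl⟩
  rw [dif_pos hex] at hcs
  refine Set.mem_iUnion₂.mpr ⟨hex.choose, hcs, ?_⟩
  refine auxTreeDist_le_of_agree fun k hk => ?_
  exact congrFun hex.choose_spec.2 ⟨k, Nat.lt_succ_of_le hk⟩

private lemma auxCoverNum_mem {V : ℕ → Type*} [∀ k, Finite (V k)] (d n : ℕ)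
    (G : Set (∀ k, Equiv.Perm (V k))) :
    ∃ s : Finset (∀ k, Equiv.Perm (V k)), s.card = coverNum d G n ∧
      G ⊆ ⋃ σ ∈ s, {τ | treeDist d σ τ ≤ treeScale d n} :=
  Nat.sInf_mem (auxCoverSet_nonempty d n G)

private lemma auxCoverNum_mono {V : ℕ → Type*} [∀ k, Finite (V k)] (d n : ℕ)
    {G' G : Set (∀ k, Equiv.Perm (V k))} (hsub : G' ⊆ G) :
    coverNum d G' n ≤ coverNum d G n := by
  obtain ⟨s, hcard, hcov⟩ := auxCoverNum_mem d n G
  exact Nat.sInf_le ⟨s, hcard, hsub.trans hcov⟩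

private lemma auxOne_le_coverNum {V : ℕ → Type*} [∀ k, Finite (V k)] (d n : ℕ)
    {G : Set (∀ k, Equiv.Perm (V k))} (hne : G.Nonempty) :
    1 ≤ coverNum d G n := by
  obtain ⟨s, hcard, hcov⟩ := auxCoverNum_mem d n G
  rw [Nat.one_le_iff_ne_zero]
  intro h0
  rw [h0, Finset.card_eq_zero] at hcard
  obtain ⟨x, hx⟩ := hne
  have := hcov hx
  simp [hcard] at this

private lemma auxCoverNum_coset {V : ℕ → Type*} [∀ k, Finite (V k)] (d n : ℕ)
    {G' G : Set (∀ k, Equiv.Perm (V k))}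
    (t : Finset (∀ k, Equiv.Perm (V k)))
    (hcov : ∀ x ∈ G, ∃ g ∈ t, ∃ y ∈ G', x = g * y) :
    coverNum d G n ≤ t.card * coverNum d G' n := by
  classical
  obtain ⟨s, hcard, hc⟩ := auxCoverNum_mem d n G'
  let s' : Finset (∀ k, Equiv.Perm (V k)) :=
    Finset.image (fun p : _ × _ => p.1 * p.2) (t ×ˢ s)
  have hcov' : G ⊆ ⋃ σ ∈ s', {τ | treeDist d σ τ ≤ treeScale d n} := by
    intro x hx
    obtain ⟨g, hg, y, hy, rfl⟩ := hcov x hx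
    obtain ⟨σ, hσ, hdist⟩ := Set.mem_iUnion₂.mp (hc hy)
    refine Set.mem_iUnion₂.mpr ⟨g * σ, ?_, ?_⟩
    · exact Finset.mem_image.mpr ⟨(g, σ), Finset.mem_product.mpr ⟨hg, hσ⟩, rfl⟩
    · show treeDist d (g * σ) (g * y) ≤ treeScale d n
      rw [auxTreeDist_mul_left]
      exact hdist
  calc coverNum d G n ≤ s'.card := Nat.sInf_le ⟨s', rfl, hcov'⟩
    _ ≤ (t ×ˢ s).card := Finset.card_image_le
    _ = t.card * s.card := Finset.card_product t s
    _ = t.card * coverNum d G' n := by rw [hcard]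

/-! ### Main abstract lemma -/

private lemma auxDims_eq_of_cosets {V : ℕ → Type*} [∀ k, Finite (V k)] {d : ℕ}
    (hd : 2 ≤ d) {G' G : Set (∀ k, Equiv.Perm (V k))} (hsub : G' ⊆ G)
    (hne : G'.Nonempty) (t : Finset (∀ k, Equiv.Perm (V k)))
    (hcov : ∀ x ∈ G, ∃ g ∈ t, ∃ y ∈ G', x = g * y) :
    dimLower d G' = dimLower d G ∧ dimUpper d G' = dimUpper d G := by
  have hGne : G.Nonempty := ⟨hne.choose, hsub hne.choose_spec⟩
  have htne : 1 ≤ t.card := by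
    obtain ⟨x, hx⟩ := hGne
    obtain ⟨g, hg, -⟩ := hcov x hx
    exact Finset.card_pos.mpr ⟨g, hg⟩
  have hfac2 : (2 : ℝ) ≤ (d.factorial : ℝ) := by
    have : Nat.factorial 2 ≤ Nat.factorial d := Nat.factorial_le hd
    have h2 : (2 : ℕ) ≤ d.factorial := by simpa [Nat.factorial] using this
    exact_mod_cast h2
  have hlog2 : (0 : ℝ) < Real.log 2 := Real.log_pos one_lt_two
  have hL : ∀ n, Real.log (1 / treeScale d n)
      = (scaleExp d n : ℝ) * Real.log (d.factorial : ℝ) := by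
    intro n
    rw [one_div, treeScale, inv_inv, Real.log_pow]
  have hLn : ∀ n : ℕ, (n : ℝ) * Real.log 2 ≤ Real.log (1 / treeScale d n) := by
    intro n
    rw [hL]
    have h1 : (n : ℝ) ≤ (scaleExp d n : ℝ) := by
      have : n ≤ scaleExp d n := by
        unfold scaleExp
        calc n = ∑ _i ∈ Finset.range n, 1 := by simp
          _ ≤ ∑ i ∈ Finset.range n, d ^ i :=
            Finset.sum_le_sum fun i _ => Nat.one_le_pow _ _ (by omega)
      exact_mod_cast this
    have h2 : Real.log 2 ≤ Real.log (d.factorial : ℝ) := by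
      apply Real.log_le_log (by norm_num) hfac2
    exact mul_le_mul h1 h2 hlog2.le (by positivity)
  set u : ℕ → ℝ :=
    fun n => Real.log (coverNum d G' n : ℝ) / Real.log (1 / treeScale d n) with hu
  set v : ℕ → ℝ :=
    fun n => Real.log (coverNum d G n : ℝ) / Real.log (1 / treeScale d n) with hv
  have hN1 : ∀ n, 1 ≤ coverNum d G' n := fun n => auxOne_le_coverNum d n hne
  have hNm : ∀ n, coverNum d G' n ≤ coverNum d G n := fun n => auxCoverNum_mono d n hsub
  have hNb : ∀ n, coverNum d G n ≤ t.card * coverNum d G' n :=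
    fun n => auxCoverNum_coset d n t hcov
  have htend : Tendsto (fun n => v n - u n) atTop (nhds 0) := by
    have hbound : Tendsto (fun n : ℕ => Real.log (t.card : ℝ) / ((n : ℝ) * Real.log 2))
        atTop (nhds 0) := by
      apply Tendsto.div_atTop tendsto_const_nhds
      exact Tendsto.atTop_mul_const hlog2 tendsto_natCast_atTop_atTop
    apply squeeze_zero' ?_ ?_ hbound
    · filter_upwards [eventually_ge_atTop 1] with n hn
      have hLpos : (0 : ℝ) < Real.log (1 / treeScale d n) :=
        lt_of_lt_of_le (by positivity) (hLn n)
      have hlogle : Real.log (coverNum d G' n : ℝ) ≤ Real.log (coverNum d G n : ℝ) := by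
        apply Real.log_le_log (by exact_mod_cast hN1 n)
        exact_mod_cast hNm n
      simp only [hu, hv]
      rw [← sub_div]
      have hsub0 : (0:ℝ) ≤ Real.log (coverNum d G n : ℝ)
          - Real.log (coverNum d G' n : ℝ) := by linarith
      exact div_nonneg hsub0 hLpos.le
    · filter_upwards [eventually_ge_atTop 1] with n hn
      have hnpos : (0 : ℝ) < (n : ℝ) * Real.log 2 := by
        have : (1 : ℝ) ≤ (n : ℝ) := by exact_mod_cast hn
        nlinarith
      have hLpos : (0 : ℝ) < Real.log (1 / treeScale d n) :=
        lt_of_lt_of_le hnpos (hLn n)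
      have hnum : Real.log (coverNum d G n : ℝ) - Real.log (coverNum d G' n : ℝ)
          ≤ Real.log (t.card : ℝ) := by
        have hle : (coverNum d G n : ℝ) ≤ (t.card : ℝ) * (coverNum d G' n : ℝ) := by
          exact_mod_cast hNb n
        have h1 : Real.log (coverNum d G n : ℝ)
            ≤ Real.log ((t.card : ℝ) * (coverNum d G' n : ℝ)) := by
          apply Real.log_le_log ?_ hle
          have hpos : 0 < coverNum d G n := lt_of_lt_of_le one_pos ((hN1 n).trans (hNm n))
          exact_mod_cast hpos
        rw [Real.log_mul (by exact_mod_cast Nat.one_le_iff_ne_zero.mp htne)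
          (by exact_mod_cast Nat.one_le_iff_ne_zero.mp (hN1 n))] at h1
        linarith
      have hnumpos : (0:ℝ) ≤ Real.log (coverNum d G n : ℝ)
          - Real.log (coverNum d G' n : ℝ) := by
        have hc1 : (1:ℝ) ≤ (coverNum d G' n : ℝ) := by exact_mod_cast hN1 n
        have hc2 : ((coverNum d G' n : ℕ) : ℝ) ≤ ((coverNum d G n : ℕ) : ℝ) := by
          exact_mod_cast hNm n
        have := Real.log_le_log (by linarith) hc2
        linarith
      simp only [hu, hv]
      rw [← sub_div]
      exact div_le_div₀ (Real.log_nonneg (by exact_mod_cast htne)) hnum hnpos (hLn n)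
  exact ⟨auxLiminf_eq htend, auxLimsup_eq htend⟩

end AuxProof

theorem arboreal_base_extension_invariance {K : Type*} [Field K] [NumberField K] {d : ℕ}
    (hd : 2 ≤ d) (X : CurveOverK K) (hgenus : X.genus = 0 ∨ X.genus = 1)
    (f : CurveMor X d) (α : X.Pts) (hα : X.fod α = ⊥)
    (K' : IntermediateField K (Kbar K)) (hK' : FiniteDimensional K K') :
    dimLower d (arbGal (K := K) (fun σ => ⇑(X.act σ)) K' f.toFun α) =
        dimLower d (arbGal (K := K) (fun σ => ⇑(X.act σ)) ⊥ f.toFun α) ∧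
      dimUpper d (arbGal (K := K) (fun σ => ⇑(X.act σ)) K' f.toFun α) =
        dimUpper d (arbGal (K := K) (fun σ => ⇑(X.act σ)) ⊥ f.toFun α) := by
  classical
  set φ := f.toFun with hφ
  -- the base point is fixed by every Galois automorphism
  have hfixα : ∀ σ : Kbar K ≃ₐ[K] Kbar K, X.act σ α = α := by
    intro σ
    rw [X.fod_spec, hα]
    intro x hx
    obtain ⟨k, rfl⟩ := IntermediateField.mem_bot.mp hx
    exact σ.commutes k
  have hiter : ∀ (n : ℕ) (σ : Kbar K ≃ₐ[K] Kbar K) (P : X.Pts),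
      φ^[n] (X.act σ P) = X.act σ (φ^[n] P) := by
    intro n σ
    induction n with
    | zero => intro P; simp
    | succ n ih =>
      intro P
      rw [Function.iterate_succ_apply', Function.iterate_succ_apply', ih]
      exact f.equivariant σ (φ^[n] P)
  have hlevel : ∀ (σ : Kbar K ≃ₐ[K] Kbar K) (n : ℕ) (β : X.Pts),
      φ^[n] β = α ↔ φ^[n] (X.act σ β) = α := by
    intro σ n β
    constructor
    · intro h; rw [hiter, h, hfixα]
    · intro h
      rw [hiter] at h
      exact (X.act σ).injective (h.trans (hfixα σ).symm)
  let ρ : (Kbar K ≃ₐ[K] Kbar K) → ∀ n, Equiv.Perm (preV φ α n) :=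
    fun σ n => Equiv.Perm.subtypePerm (X.act σ) (fun β => (hlevel σ n β).symm)
  have hρ_apply : ∀ (σ : Kbar K ≃ₐ[K] Kbar K) (n : ℕ) (β : preV φ α n),
      ((ρ σ n β : preV φ α n) : X.Pts) = X.act σ (β : X.Pts) := fun _ _ _ => rfl
  have hρ_mul : ∀ σ τ : Kbar K ≃ₐ[K] Kbar K, ρ (σ * τ) = ρ σ * ρ τ := by
    intro σ τ
    funext n
    apply Equiv.ext
    intro β
    apply Subtype.ext
    show X.act (σ * τ) (β : X.Pts) = X.act σ (X.act τ (β : X.Pts))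
    rw [map_mul]
    rfl
  have hG_eq : ∀ L : IntermediateField K (Kbar K),
      arbGal (K := K) (fun σ => ⇑(X.act σ)) L φ α = ρ '' {σ | ∀ x ∈ L, σ x = x} := by
    intro L
    ext g
    constructor
    · rintro ⟨σ, hσL, hσ⟩
      refine ⟨σ, hσL, ?_⟩
      funext n
      apply Equiv.ext
      intro β
      apply Subtype.ext
      exact (hρ_apply σ n β).trans (hσ n β).symm
    · rintro ⟨σ, hσL, rfl⟩
      exact ⟨σ, hσL, fun n β => rfl⟩
  -- finiteness of the levels of the preimage tree
  have hfin : ∀ n, Finite (preV φ α n) := by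
    intro n
    induction n with
    | zero =>
      have : Subsingleton (preV φ α 0) :=
        ⟨fun a b => Subtype.ext (a.2.trans b.2.symm)⟩
      exact Finite.of_subsingleton
    | succ n ih =>
      haveI := ih
      haveI hfib : ∀ γ : preV φ α n, Finite {Q : X.Pts // φ Q = (γ : X.Pts)} := by
        intro γ
        have h1 := f.fiber_lb (γ : X.Pts)
        exact ((Nat.card_pos_iff).mp (lt_of_lt_of_le zero_lt_one h1)).2
      let e : preV φ α (n + 1) → Σ γ : preV φ α n, {Q : X.Pts // φ Q = (γ : X.Pts)} :=
        fun β => ⟨preParent φ α n β, ⟨β.1, rfl⟩⟩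
      have he : Function.Injective e := by
        intro a b hab
        apply Subtype.ext
        exact congrArg (fun x : (Σ γ : preV φ α n, {Q : X.Pts // φ Q = (γ : X.Pts)}) =>
          (x.2 : X.Pts)) hab
      exact Finite.of_injective e he
  haveI : ∀ n, Finite (preV φ α n) := hfin
  -- finitely many coset representatives from embeddings of K'
  haveI := hK'
  haveI : Finite (↥K' →ₐ[K] Kbar K) := Finite.of_fintype _
  let res : (Kbar K ≃ₐ[K] Kbar K) → (↥K' →ₐ[K] Kbar K) :=
    fun σ => (σ.toAlgHom).comp K'.val
  have hRfin : (Set.range res).Finite := Set.toFinite _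
  let pick : (↥K' →ₐ[K] Kbar K) → (Kbar K ≃ₐ[K] Kbar K) :=
    fun e => if h : ∃ σ, res σ = e then h.choose else 1
  let reps : Finset (Kbar K ≃ₐ[K] Kbar K) := hRfin.toFinset.image pick
  let t : Finset (∀ n, Equiv.Perm (preV φ α n)) := reps.image ρ
  have hsub : arbGal (K := K) (fun σ => ⇑(X.act σ)) K' φ α ⊆
      arbGal (K := K) (fun σ => ⇑(X.act σ)) ⊥ φ α := by
    rw [hG_eq, hG_eq]
    apply Set.image_mono
    intro σ _
    intro x hx
    obtain ⟨k, rfl⟩ := IntermediateField.mem_bot.mp hx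
    exact σ.commutes k
  have hne : (arbGal (K := K) (fun σ => ⇑(X.act σ)) K' φ α).Nonempty := by
    rw [hG_eq]
    exact ⟨ρ 1, 1, fun x _ => rfl, rfl⟩
  have hcov : ∀ x ∈ arbGal (K := K) (fun σ => ⇑(X.act σ)) ⊥ φ α,
      ∃ g ∈ t, ∃ y ∈ arbGal (K := K) (fun σ => ⇑(X.act σ)) K' φ α, x = g * y := by
    rw [hG_eq]
    rintro x ⟨σ, -, rfl⟩
    have hex : ∃ τ, res τ = res σ := ⟨σ, rfl⟩
    have hτ : res hex.choose = res σ := hex.choose_spec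
    have hτreps : hex.choose ∈ reps := by
      refine Finset.mem_image.mpr ⟨res σ, hRfin.mem_toFinset.mpr ⟨σ, rfl⟩, ?_⟩
      show pick (res σ) = hex.choose
      simp only [pick]
      rw [dif_pos hex]
    refine ⟨ρ hex.choose, Finset.mem_image.mpr ⟨hex.choose, hτreps, rfl⟩,
      ρ (hex.choose⁻¹ * σ), ?_, ?_⟩
    · rw [hG_eq]
      refine ⟨hex.choose⁻¹ * σ, ?_, rfl⟩
      intro x hx
      have h1 : hex.choose x = σ x := by
        have := DFunLike.congr_fun hτ ⟨x, hx⟩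
        exact this
      show (hex.choose⁻¹ * σ) x = x
      have h2 : (hex.choose⁻¹ * σ) x = hex.choose⁻¹ (σ x) := rfl
      rw [h2, ← h1]
      exact hex.choose.symm_apply_apply x
    · rw [← hρ_mul, mul_inv_cancel_left]
  exact auxDims_eq_of_cosets hd hsub hne t hcov
end
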